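/- arXiv:1812.06119 — 5 statements merged into one kernel-verified Lean document; each statement's English description precedes it below -/
import Mathlib

section
/- For every integer k ≥ 2, the sum over j from 1 to k−1 of 1/sin²(jπ/k) equals (k²−1)/3. -/
open Real

open Polynomial in
lemma aux_deriv_prod {ι : Type*} [DecidableEq ι] (s : Finset ι) (f : ι → ℂ[X]) :
    derivative (∏ i ∈ s, f i) = ∑ i ∈ s, (∏ j ∈ s.erase i, f j) * derivative (f i) := by
  induction s using Finset.induction_on with
  | empty => simp
  | @insert a s ha ih =>
    rw [Finset.prod_insert ha, derivative_mul, ih, Finset.mul_sum, Finset.sum_insert ha,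
      Finset.erase_insert ha]
    congr 1
    · ring
    · refine Finset.sum_congr rfl fun i hi => ?_
      rw [Finset.erase_insert_of_ne (by rintro rfl; exact ha hi),
        Finset.prod_insert (fun h => ha (Finset.mem_of_mem_erase h))]
      ring

lemma aux_sum_sq (n : ℕ) :
    ∑ i ∈ Finset.range n, (i : ℂ) * ((i : ℂ) - 1) = n * (n - 1) * (n - 2) / 3 := by
  induction n with
  | zero => simp
  | succ n ih => rw [Finset.sum_range_succ, ih]; push_cast; ring

lemma aux_cast_pred (i : ℕ) : ((i : ℂ)) * (((i - 1 : ℕ) : ℂ)) = (i : ℂ) * ((i : ℂ) - 1) := by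
  cases i with
  | zero => simp
  | succ n => push_cast [Nat.succ_sub_one]; ring

theorem stmt_0 (k : ℕ) (hk : 2 ≤ k) :
    ∑ j ∈ Finset.Icc 1 (k - 1), (1 / Real.sin (j * Real.pi / k) ^ 2)
      = ((k : ℝ) ^ 2 - 1) / 3 := by
  classical
  have hk0 : (k : ℂ) ≠ 0 := Nat.cast_ne_zero.mpr (by omega)
  set ζ : ℂ := Complex.exp (2 * Real.pi * Complex.I / k) with hζdef
  have hprim : IsPrimitiveRoot ζ k := Complex.isPrimitiveRoot_exp k (by omega)
  set s : Finset ℕ := Finset.Icc 1 (k - 1) with hsdef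
  have hζ0 : ζ ≠ 0 := Complex.exp_ne_zero _
  have hmem : ∀ j ∈ s, 1 ≤ j ∧ j ≤ k - 1 := fun j hj => Finset.mem_Icc.mp hj
  have hne : ∀ j ∈ s, ζ ^ j ≠ 1 := by
    intro j hj h1
    obtain ⟨h1', h2'⟩ := hmem j hj
    have hd := (hprim.pow_eq_one_iff_dvd j).mp h1
    have := Nat.le_of_dvd (by omega) hd
    omega
  have hsub : ∀ j ∈ s, (1 : ℂ) - ζ ^ j ≠ 0 := by
    intro j hj
    exact sub_ne_zero.mpr (fun h => hne j hj h.symm)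
  set x : ℕ → ℂ := fun j => 1 / (1 - ζ ^ j) with hxdef
  open Polynomial in
  have hpoly : (∏ j ∈ s, (X - C (ζ ^ j))) = ∑ i ∈ Finset.range k, (X : ℂ[X]) ^ i := by
    have h1 : (X : ℂ[X]) ^ k - 1 = ∏ i ∈ Finset.range k, (X - C (ζ ^ i)) := by
      simpa using X_pow_sub_C_eq_prod hprim (by omega : 0 < k) (one_pow k)
    have h2 : Finset.range k = insert 0 s := by
      ext i; simp only [Finset.mem_range, Finset.mem_insert, hsdef, Finset.mem_Icc]; omega
    have h3 : (X : ℂ[X]) ^ k - 1 = (X - 1) * ∏ j ∈ s, (X - C (ζ ^ j)) := by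
      rw [h1, h2, Finset.prod_insert (by simp [hsdef])]
      simp
    have h4 : ((X : ℂ[X]) - 1) * ∑ i ∈ Finset.range k, (X : ℂ[X]) ^ i
        = (X - 1) * ∏ j ∈ s, (X - C (ζ ^ j)) := by
      rw [← h3, mul_comm, geom_sum_mul]
    have hX1 : (X : ℂ[X]) - 1 ≠ 0 := X_sub_C_ne_zero 1
    exact (mul_left_cancel₀ hX1 h4).symm
  have hprod1 : (∏ j ∈ s, (1 - ζ ^ j)) = (k : ℂ) := by
    have h := congrArg (Polynomial.eval 1) hpoly
    simpa [Polynomial.eval_prod, Polynomial.eval_finset_sum] using h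
  have hxmul : ∀ j ∈ s, x j * (1 - ζ ^ j) = 1 := by
    intro j hj
    simp only [hxdef]
    rw [one_div, inv_mul_cancel₀ (hsub j hj)]
  have hprod_erase : ∀ j ∈ s, (∏ i ∈ s.erase j, (1 - ζ ^ i)) = (k : ℂ) * x j := by
    intro j hj
    have h : (∏ i ∈ s.erase j, (1 - ζ ^ i)) * (1 - ζ ^ j) = (k : ℂ) := by
      rw [← hprod1]; exact Finset.prod_erase_mul s _ hj
    apply mul_right_cancel₀ (hsub j hj)
    rw [h, mul_assoc, hxmul j hj, mul_one]
  -- S1 via involution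
  have hS1 : ∑ j ∈ s, x j = ((k : ℂ) - 1) / 2 := by
    have hzero : ∑ j ∈ s, (x j - 1 / 2) = 0 := by
      apply Finset.sum_involution (fun j _ => k - j)
      · intro j hj
        obtain ⟨h1', h2'⟩ := hmem j hj
        have hkj : ζ ^ (k - j) * ζ ^ j = 1 := by
          rw [← pow_add]
          have hkk : k - j + j = k := by omega
          rw [hkk, hprim.pow_eq_one]
        have hinv : ζ ^ (k - j) = (ζ ^ j)⁻¹ := eq_inv_of_mul_eq_one_left hkj
        have hne2 : (1 : ℂ) - (ζ ^ j)⁻¹ ≠ 0 := by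
          rw [sub_ne_zero]
          intro h
          exact hne j hj (inv_eq_one.mp h.symm)
        simp only [hxdef, hinv]
        have hj0 : (ζ : ℂ) ^ j ≠ 0 := pow_ne_zero _ hζ0
        have hA : (1 : ℂ) - ζ ^ j ≠ 0 := hsub j hj
        have hrw : (1 : ℂ) - (ζ ^ j)⁻¹ = (ζ ^ j - 1) / ζ ^ j := by field_simp
        have hA' : ζ ^ j - 1 ≠ 0 := by intro h; apply hA; linear_combination -h
        rw [hrw, one_div_div]
        field_simp
        ring
      · intro j hj hfne heq
        obtain ⟨h1', h2'⟩ := hmem j hj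
        have hj2 : k = 2 * j := by omega
        have hsq : (ζ ^ j) ^ 2 = 1 := by
          rw [← pow_mul, mul_comm j 2, ← hj2, hprim.pow_eq_one]
        have hfac : (ζ ^ j - 1) * (ζ ^ j + 1) = 0 := by linear_combination hsq
        rcases mul_eq_zero.mp hfac with h | h
        · exact absurd (sub_eq_zero.mp h) (hne j hj)
        · have hm1 : ζ ^ j = -1 := eq_neg_of_add_eq_zero_left h
          apply hfne
          simp only [hxdef, hm1]
          norm_num
      · intro j hj
        obtain ⟨h1', h2'⟩ := hmem j hj
        simp only [hsdef, Finset.mem_Icc]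
        omega
      · intro j hj
        obtain ⟨h1', h2'⟩ := hmem j hj
        omega
    rw [Finset.sum_sub_distrib, sub_eq_zero] at hzero
    rw [hzero, Finset.sum_const, hsdef, Nat.card_Icc]
    have hc : ((k - 1 + 1 - 1 : ℕ) : ℂ) = (k : ℂ) - 1 := by
      have : k - 1 + 1 - 1 = k - 1 := by omega
      rw [this, Nat.cast_sub (by omega)]
      simp
    rw [nsmul_eq_mul, hc]
    ring
  -- the key per-term identity
  have hfin : ∀ j ∈ s, (1 : ℂ) / (Complex.sin ((j : ℂ) * (Real.pi : ℂ) / (k : ℂ))) ^ 2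
      = 4 * x j - 4 * x j ^ 2 := by
    intro j hj
    set θ : ℝ := j * Real.pi / k with hθdef
    have harg : ((j : ℂ) * (Real.pi : ℂ) / (k : ℂ)) = ((θ : ℝ) : ℂ) := by
      rw [hθdef]; push_cast; ring
    rw [harg]
    set e : ℂ := Complex.exp ((θ : ℂ) * Complex.I) with hedef
    have he0 : e ≠ 0 := Complex.exp_ne_zero _
    have hw : ζ ^ j = e ^ 2 := by
      rw [hζdef, hedef, ← Complex.exp_nat_mul, ← Complex.exp_nat_mul]
      congr 1
      rw [hθdef]
      push_cast
      field_simp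
    have hsin2 : 2 * Complex.sin (θ : ℂ) * Complex.I = e - e⁻¹ := by
      rw [hedef, ← Complex.exp_neg, ← neg_mul, Complex.exp_mul_I, Complex.exp_mul_I,
        Complex.cos_neg, Complex.sin_neg]
      ring
    have hinv : e * (e - 2 * Complex.sin (θ : ℂ) * Complex.I) = 1 := by
      have h5 : e - 2 * Complex.sin (θ : ℂ) * Complex.I = e⁻¹ := by
        linear_combination -hsin2
      rw [h5, mul_inv_cancel₀ he0]
    have hkey : (Complex.sin (θ : ℂ)) ^ 2 * (4 * e ^ 2) = -(1 - e ^ 2) ^ 2 := by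
      linear_combination (e ^ 2 - 1 + 2 * e * Complex.sin (θ : ℂ) * Complex.I) * hinv
        + 4 * e ^ 2 * (Complex.sin (θ : ℂ)) ^ 2 * Complex.I_sq
    have hw0 : ζ ^ j ≠ 0 := pow_ne_zero _ hζ0
    have hval : (Complex.sin (θ : ℂ)) ^ 2 = -(1 - ζ ^ j) ^ 2 / (4 * ζ ^ j) := by
      rw [eq_div_iff (by simpa using hw0), hw]
      exact hkey
    rw [hval]
    simp only [hxdef]
    have h1w := hsub j hj
    field_simp
    ring
  -- second derivative computation
  open Polynomial in
  have hkey2 : ∀ j ∈ s, ∀ i ∈ s.erase j,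
      (∏ l ∈ (s.erase j).erase i, (1 - ζ ^ l)) = (k : ℂ) * x j * x i := by
    intro j hj i hi
    have hi' : i ∈ s := Finset.mem_of_mem_erase hi
    have h : (∏ l ∈ (s.erase j).erase i, (1 - ζ ^ l)) * (1 - ζ ^ i) = (k : ℂ) * x j := by
      rw [← hprod_erase j hj]; exact Finset.prod_erase_mul (s.erase j) _ hi
    apply mul_right_cancel₀ (hsub i hi')
    rw [h, mul_assoc, mul_assoc, hxmul i hi', mul_one]
  open Polynomial in
  have hL : Polynomial.eval 1 (derivative (derivative (∏ j ∈ s, (X - C (ζ ^ j)))))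
      = ∑ j ∈ s, ∑ i ∈ s.erase j, ((k : ℂ) * x j * x i) := by
    rw [aux_deriv_prod]
    simp only [derivative_X_sub_C, mul_one]
    rw [derivative_sum, eval_finset_sum]
    refine Finset.sum_congr rfl fun j hj => ?_
    rw [aux_deriv_prod]
    simp only [derivative_X_sub_C, mul_one]
    rw [eval_finset_sum]
    refine Finset.sum_congr rfl fun i hi => ?_
    rw [eval_prod]
    simp only [eval_sub, eval_X, eval_C]
    exact hkey2 j hj i hi
  open Polynomial in
  have hR : Polynomial.eval 1 (derivative (derivative (∑ i ∈ Finset.range k, (X : ℂ[X]) ^ i)))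
      = ∑ i ∈ Finset.range k, (i : ℂ) * ((i : ℂ) - 1) := by
    rw [derivative_sum]
    simp only [derivative_X_pow]
    rw [derivative_sum]
    simp only [derivative_C_mul, derivative_X_pow]
    rw [eval_finset_sum]
    refine Finset.sum_congr rfl fun i _ => ?_
    simp only [eval_mul, eval_C, eval_pow, eval_X, one_pow, mul_one]
    exact aux_cast_pred i
  have hdd : ∑ j ∈ s, ∑ i ∈ s.erase j, ((k : ℂ) * x j * x i)
      = (k : ℂ) * ((k : ℂ) - 1) * ((k : ℂ) - 2) / 3 := by
    rw [← hL, hpoly, hR, aux_sum_sq]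
  have h2 : ∑ j ∈ s, ∑ i ∈ s.erase j, ((k : ℂ) * x j * x i)
      = (k : ℂ) * ((∑ l ∈ s, x l) ^ 2 - ∑ l ∈ s, x l ^ 2) := by
    have step : ∀ j ∈ s, ∑ i ∈ s.erase j, ((k : ℂ) * x j * x i)
        = (k : ℂ) * x j * (∑ l ∈ s, x l) - (k : ℂ) * x j ^ 2 := by
      intro j hj
      rw [← Finset.mul_sum, Finset.sum_erase_eq_sub hj]
      ring
    rw [Finset.sum_congr rfl step, Finset.sum_sub_distrib]
    have e1 : ∑ j ∈ s, ((k : ℂ) * x j * (∑ l ∈ s, x l))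
        = (k : ℂ) * ((∑ l ∈ s, x l) * (∑ l ∈ s, x l)) := by
      rw [← Finset.sum_mul, ← Finset.mul_sum]
      ring
    have e2 : ∑ j ∈ s, ((k : ℂ) * x j ^ 2) = (k : ℂ) * ∑ l ∈ s, x l ^ 2 :=
      (Finset.mul_sum _ _ _).symm
    rw [e1, e2]
    ring
  have hT : ∑ l ∈ s, x l ^ 2 = (((k : ℂ) - 1) / 2) ^ 2 - ((k : ℂ) - 1) * ((k : ℂ) - 2) / 3 := by
    have h3 : (k : ℂ) * ((((k : ℂ) - 1) / 2) ^ 2 - ∑ l ∈ s, x l ^ 2)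
        = (k : ℂ) * (((k : ℂ) - 1) * ((k : ℂ) - 2) / 3) := by
      rw [← hS1, ← h2, hdd]
      ring
    have h4 := mul_left_cancel₀ hk0 h3
    linear_combination -h4
  -- assemble
  apply Complex.ofReal_injective
  push_cast
  rw [Finset.sum_congr rfl hfin, Finset.sum_sub_distrib, ← Finset.mul_sum, ← Finset.mul_sum,
    hS1, hT]
  ring
end

section
/- For every integer k ≥ 2, the sum over j from 1 to k−1 of 1/sin⁴(jπ/k) equals (k⁴−1)/45 + 2(k²−1)/9. -/
open Polynomial Complex

namespace SinPowAux




theorem esymm_zero_mult (n : ℕ) : (0 : Multiset ℂ).esymm (n+1) = 0 := by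
  simp [Multiset.esymm]
  rw [Multiset.powersetCard_eq_empty _ (by simp)]
  simp

theorem esymm_cons (a : ℂ) (s : Multiset ℂ) (n : ℕ) :
    (a ::ₘ s).esymm (n+1) = s.esymm (n+1) + a * s.esymm n := by
  simp [Multiset.esymm, Multiset.powersetCard_cons, Multiset.map_map, Function.comp,
    Multiset.sum_map_mul_left]

noncomputable def pw (s : Multiset ℂ) (r : ℕ) : ℂ := (s.map (· ^ r)).sum

theorem pw_cons (a : ℂ) (s : Multiset ℂ) (r : ℕ) : pw (a ::ₘ s) r = a ^ r + pw s r := by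
  simp [pw]

theorem newton (s : Multiset ℂ) :
    pw s 1 = s.esymm 1 ∧
    pw s 2 = s.esymm 1 ^ 2 - 2 * s.esymm 2 ∧
    pw s 3 = s.esymm 1 ^ 3 - 3 * s.esymm 1 * s.esymm 2 + 3 * s.esymm 3 ∧
    pw s 4 = s.esymm 1 ^ 4 - 4 * s.esymm 1 ^ 2 * s.esymm 2 + 2 * s.esymm 2 ^ 2
      + 4 * s.esymm 1 * s.esymm 3 - 4 * s.esymm 4 := by
  induction s using Multiset.induction with
  | empty => simp [pw, esymm_zero_mult]
  | cons a s ih =>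
    obtain ⟨h1, h2, h3, h4⟩ := ih
    have e0 : s.esymm 0 = 1 := by simp [Multiset.esymm]
    refine ⟨?_, ?_, ?_, ?_⟩ <;>
      simp only [pw_cons, esymm_cons, h1, h2, h3, h4, e0] <;> ring



variable {k : ℕ}

noncomputable def ζ (k : ℕ) : ℂ := Complex.exp (2 * Real.pi * Complex.I / k)

noncomputable def v (k j : ℕ) : ℂ := (1 - ζ k ^ j)⁻¹

noncomputable def M (k : ℕ) : Multiset ℂ := (Finset.Icc 1 (k-1)).val.map (v k)



theorem prim (hk : 2 ≤ k) : IsPrimitiveRoot (ζ k) k :=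
  Complex.isPrimitiveRoot_exp k (by omega)

theorem prod_range (hk : 2 ≤ k) (x : ℂ) :
    ∏ j ∈ Finset.range k, (x - ζ k ^ j) = x ^ k - 1 := by
  have hmon : (X ^ k - 1 : ℂ[X]).Monic := by
    simpa using monic_X_pow_sub_C (1:ℂ) (by omega : k ≠ 0)
  have hroots : (X ^ k - 1 : ℂ[X]).roots = Polynomial.nthRoots k (1:ℂ) := by
    simp [Polynomial.nthRoots]
  have hcard : Multiset.card (X ^ k - 1 : ℂ[X]).roots = (X ^ k - 1 : ℂ[X]).natDegree := by
    rw [hroots, (prim hk).card_nthRoots_one]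
    symm; simpa using natDegree_X_pow_sub_C (n := k) (r := (1:ℂ))
  have h1 : (X ^ k - 1 : ℂ[X]) =
      ((Polynomial.nthRoots k (1:ℂ)).map fun a => X - C a).prod := by
    conv_lhs => rw [← prod_multiset_X_sub_C_of_monic_of_roots_card_eq hmon hcard]
    rw [hroots]
  have h2 : Polynomial.nthRoots k (1:ℂ) = (Multiset.range k).map ((ζ k) ^ · * 1) :=
    (prim hk).nthRoots_eq (by simp)
  have := congrArg (Polynomial.eval x) h1
  simp only [eval_sub, eval_pow, eval_X, eval_one, h2, Multiset.map_map] at this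
  rw [this, Polynomial.eval_multiset_prod, Multiset.map_map]
  rw [Finset.prod_eq_multiset_prod]
  simp [Finset.range, Function.comp]

theorem geom_poly (hk : 2 ≤ k) :
    (∏ j ∈ Finset.Icc 1 (k-1), (X - C (ζ k ^ j)) : ℂ[X]) = ∑ m ∈ Finset.range k, X ^ m := by
  apply eq_of_infinite_eval_eq
  apply Set.Infinite.mono (s := {(1:ℂ)}ᶜ)
  swap
  · exact (Set.finite_singleton 1).infinite_compl
  intro x hx
  simp only [Set.mem_compl_iff, Set.mem_singleton_iff] at hx
  simp only [Set.mem_setOf_eq, eval_prod, eval_sub, eval_X, eval_C, eval_finset_sum, eval_pow]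
  have hx1 : x - 1 ≠ 0 := sub_ne_zero.mpr hx
  apply mul_left_cancel₀ hx1
  have hsplit : ∏ j ∈ Finset.range k, (x - ζ k ^ j)
      = (x - 1) * ∏ j ∈ Finset.Icc 1 (k-1), (x - ζ k ^ j) := by
    have : Finset.range k = insert 0 (Finset.Icc 1 (k-1)) := by
      ext j; simp [Finset.mem_range, Finset.mem_Icc]; omega
    rw [this, Finset.prod_insert (by simp)]
    simp
  rw [← hsplit, prod_range hk, mul_comm (x-1), geom_sum_mul]

theorem prod_one_sub (hk : 2 ≤ k) :
    ∏ j ∈ Finset.Icc 1 (k-1), (1 - ζ k ^ j) = (k : ℂ) := by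
  have := congrArg (Polynomial.eval 1) (geom_poly hk)
  rw [Polynomial.eval_prod] at this
  simpa using this

theorem zeta_pow_ne_one (hk : 2 ≤ k) {j : ℕ} (hj : j ∈ Finset.Icc 1 (k-1)) :
    ζ k ^ j ≠ 1 := by
  rw [Finset.mem_Icc] at hj
  exact (prim hk).pow_ne_one_of_pos_of_lt (by omega) (by omega)

theorem prod_homog (hk : 2 ≤ k) (a b : ℂ) :
    ∏ j ∈ Finset.range k, (a - b * ζ k ^ j) = a ^ k - b ^ k := by
  rcases eq_or_ne b 0 with rfl | hb
  · simp [Finset.prod_const, zero_pow (by omega : k ≠ 0)]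
  · have := prod_range hk (a / b)
    have hbk : (b : ℂ) ^ k ≠ 0 := pow_ne_zero _ hb
    calc ∏ j ∈ Finset.range k, (a - b * ζ k ^ j)
        = ∏ j ∈ Finset.range k, (b * (a / b - ζ k ^ j)) := by
          apply Finset.prod_congr rfl; intro j _; field_simp
      _ = b ^ k * ((a/b) ^ k - 1) := by
          rw [Finset.prod_mul_distrib, Finset.prod_const, Finset.card_range, this]
      _ = a ^ k - b ^ k := by rw [div_pow]; field_simp




theorem card_M (hk : 2 ≤ k) : Multiset.card (M k) = k - 1 := by
  simp [M]

theorem prod_homog' (hk : 2 ≤ k) (u : ℂ) :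
    ∏ j ∈ Finset.Icc 1 (k-1), ((1+u) - u * ζ k ^ j) = (1+u) ^ k - u ^ k := by
  rw [← prod_homog hk (1+u) u]
  have : Finset.range k = insert 0 (Finset.Icc 1 (k-1)) := by
    ext j; simp [Finset.mem_range, Finset.mem_Icc]; omega
  rw [this, Finset.prod_insert (by simp)]
  simp

theorem P_eq_Q (hk : 2 ≤ k) :
    ((M k).map fun r => X + C r).prod
      = C ((k:ℂ)⁻¹) * ∑ r ∈ Finset.range k, C ((k.choose r : ℂ)) * X ^ r := by
  apply eq_of_infinite_eval_eq
  apply Set.Infinite.mono (s := {(0:ℂ)}ᶜ)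
  swap
  · exact (Set.finite_singleton 0).infinite_compl
  intro u hu
  simp only [Set.mem_compl_iff, Set.mem_singleton_iff] at hu
  simp only [Set.mem_setOf_eq, eval_multiset_prod, Multiset.map_map, Function.comp,
    eval_add, eval_X, eval_C, eval_mul, eval_finset_sum, eval_pow, M]
  have hL : ((Finset.Icc 1 (k-1)).val.map fun j => u + v k j).prod
      = ∏ j ∈ Finset.Icc 1 (k-1), (u + v k j) := rfl
  rw [hL]
  have step : ∀ j ∈ Finset.Icc 1 (k-1),
      u + v k j = (1 - ζ k ^ j)⁻¹ * ((1+u) - u * ζ k ^ j) := by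
    intro j hj
    have h1 : (1 : ℂ) - ζ k ^ j ≠ 0 := sub_ne_zero.mpr (zeta_pow_ne_one hk hj).symm
    rw [v]
    field_simp
    ring
  rw [Finset.prod_congr rfl step, Finset.prod_mul_distrib, Finset.prod_inv_distrib,
    prod_one_sub hk, prod_homog' hk]
  have hexp : ((1+u) ^ k - u ^ k) = ∑ r ∈ Finset.range k, (k.choose r : ℂ) * u ^ r := by
    have := add_pow u 1 k
    rw [Finset.sum_range_succ] at this
    simp only [one_pow, mul_one, Nat.choose_self, Nat.cast_one] at this
    have h2 : (1+u)^k = (u+1)^k := by ring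
    rw [h2, this, add_sub_cancel_right]
    exact Finset.sum_congr rfl (fun r _ => by ring)
  rw [hexp]

theorem esymm_M (hk : 2 ≤ k) (i : ℕ) (hi : 1 ≤ i) :
    (M k).esymm i = (k.choose (i+1) : ℂ) / k := by
  rcases le_or_gt i (k-1) with h | h
  · have hcard := card_M hk
    have hcoeff := Multiset.prod_X_add_C_coeff (M k) (k := k-1-i) (by omega)
    rw [hcard] at hcoeff
    have : k - 1 - (k - 1 - i) = i := by omega
    rw [this] at hcoeff
    rw [← hcoeff, P_eq_Q hk]
    rw [coeff_C_mul, finset_sum_coeff]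
    have : ∀ r ∈ Finset.range k, (C ((k.choose r : ℂ)) * X ^ r).coeff (k-1-i)
        = if r = k-1-i then (k.choose r : ℂ) else 0 := by
      intro r _
      rw [coeff_C_mul, coeff_X_pow]
      by_cases hr : r = k-1-i
      · simp [hr]
      · rw [if_neg (fun hh => hr hh.symm), if_neg hr, mul_zero]
    rw [Finset.sum_congr rfl this, Finset.sum_ite_eq' (Finset.range k) (k-1-i)]
    rw [if_pos (by simp [Finset.mem_range]; omega)]
    have hsymm : k.choose (k-1-i) = k.choose (i+1) := by
      have : k - 1 - i = k - (i+1) := by omega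
      rw [this, Nat.choose_symm (by omega)]
    rw [hsymm]
    ring
  · have h1 : (M k).esymm i = 0 := by
      rw [Multiset.esymm, Multiset.powersetCard_eq_empty _ (by rw [card_M hk]; omega)]
      simp
    have h2 : k.choose (i+1) = 0 := Nat.choose_eq_zero_of_lt (by omega)
    rw [h1, h2]
    simp




theorem bridge (hk : 2 ≤ k) {j : ℕ} (hj : j ∈ Finset.Icc 1 (k-1)) :
    ((1 / Real.sin ((j:ℝ) * Real.pi / k) ^ 4 : ℝ) : ℂ)
      = 16 * (v k j ^ 4 - 2 * v k j ^ 3 + v k j ^ 2) := by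
  set θ : ℝ := (j:ℝ) * Real.pi / k with hθ
  set E : ℂ := Complex.exp (θ * Complex.I) with hEdef
  have hE : E ≠ 0 := Complex.exp_ne_zero _
  have hk0 : (k:ℂ) ≠ 0 := by
    simp only [ne_eq, Nat.cast_eq_zero]; omega
  have hz : ζ k ^ j = E ^ 2 := by
    rw [ζ, hEdef, ← Complex.exp_nat_mul, ← Complex.exp_nat_mul]
    · congr 1
      push_cast [hθ]
      field_simp
  have hz1 : E ^ 2 ≠ 1 := by rw [← hz]; exact zeta_pow_ne_one hk hj
  have hw : (1:ℂ) - E ^ 2 ≠ 0 := sub_ne_zero.mpr (fun h => hz1 h.symm)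
  have hw' : E ^ 2 - (1:ℂ) ≠ 0 := fun h => hw (by linear_combination -h)
  have hsin : (Real.sin θ : ℂ) = (E⁻¹ - E) * Complex.I / 2 := by
    rw [Complex.ofReal_sin, Complex.sin, ← hEdef, neg_mul, Complex.exp_neg, ← hEdef]
  have hs2 : (Real.sin θ : ℂ) ^ 2 = -(E^2 - 1)^2 / (4 * E^2) := by
    rw [hsin, div_pow, mul_pow, Complex.I_sq]
    field_simp
    ring
  have hs4 : (Real.sin θ : ℂ) ^ 4 = (E^2 - 1)^4 / (16 * E^4) := by
    rw [show ((Real.sin θ : ℂ))^4 = (((Real.sin θ : ℂ))^2)^2 by ring, hs2]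
    field_simp
    ring
  have hv : v k j = (1 - E^2)⁻¹ := by rw [v, hz]
  rw [Complex.ofReal_sin] at hs4
  push_cast
  rw [hs4, hv]
  rw [div_div_eq_mul_div, one_mul]
  field_simp
  ring

theorem choose_fac (k r : ℕ) :
    (k.choose r : ℂ) * (r.factorial : ℂ) = ∏ i ∈ Finset.range r, ((k:ℂ) - i) := by
  rcases le_or_gt r k with h | h
  · have h1 : k.descFactorial r = r.factorial * k.choose r :=
      Nat.descFactorial_eq_factorial_mul_choose k r
    have h2 : k.descFactorial r = ∏ i ∈ Finset.range r, (k - i) :=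
      Nat.descFactorial_eq_prod_range k r
    have h3 : ((k.descFactorial r : ℕ) : ℂ) = ∏ i ∈ Finset.range r, ((k:ℂ) - i) := by
      rw [h2, Nat.cast_prod]
      apply Finset.prod_congr rfl
      intro i hi
      rw [Finset.mem_range] at hi
      push_cast [Nat.cast_sub (le_of_lt (lt_of_lt_of_le hi h))]
      ring
    rw [← h3, h1]
    push_cast
    ring
  · rw [Nat.choose_eq_zero_of_lt h]
    simp only [Nat.cast_zero, zero_mul]
    symm
    apply Finset.prod_eq_zero (Finset.mem_range.mpr h)
    simp



theorem pw_M (k r : ℕ) : pw (M k) r = ∑ j ∈ Finset.Icc 1 (k-1), v k j ^ r := by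
  rw [pw, M, Multiset.map_map]
  rfl



end SinPowAux

open Real SinPowAux
set_option maxHeartbeats 1000000 in
theorem stmt_1 (k : ℕ) (hk : 2 ≤ k) :
    ∑ j ∈ Finset.Icc 1 (k - 1), (1 / Real.sin (j * Real.pi / k) ^ 4)
      = ((k : ℝ) ^ 4 - 1) / 45 + 2 * ((k : ℝ) ^ 2 - 1) / 9 := by
  have hk0 : (k:ℂ) ≠ 0 := by simp only [ne_eq, Nat.cast_eq_zero]; omega
  have main : ((∑ j ∈ Finset.Icc 1 (k - 1), (1 / Real.sin (j * Real.pi / k) ^ 4) : ℝ) : ℂ)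
      = (((k : ℝ) ^ 4 - 1) / 45 + 2 * ((k : ℝ) ^ 2 - 1) / 9 : ℝ) := by
    rw [Complex.ofReal_sum]
    have hterm : ∀ j ∈ Finset.Icc 1 (k-1),
        ((1 / Real.sin ((j:ℝ) * Real.pi / k) ^ 4 : ℝ) : ℂ)
          = 16 * (v k j ^ 4 - 2 * v k j ^ 3 + v k j ^ 2) := fun j hj => bridge hk hj
    rw [Finset.sum_congr rfl hterm]
    have hsum : ∑ j ∈ Finset.Icc 1 (k-1), (16 * (v k j ^ 4 - 2 * v k j ^ 3 + v k j ^ 2))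
        = 16 * (pw (M k) 4 - 2 * pw (M k) 3 + pw (M k) 2) := by
      rw [pw_M, pw_M, pw_M]
      simp only [Finset.mul_sum, ← Finset.sum_sub_distrib, ← Finset.sum_add_distrib]
    rw [hsum]
    obtain ⟨-, h2, h3, h4⟩ := newton (M k)
    rw [h2, h3, h4, esymm_M hk 1 (by norm_num), esymm_M hk 2 (by norm_num),
      esymm_M hk 3 (by norm_num), esymm_M hk 4 (by norm_num)]
    have c2 : (k.choose 2 : ℂ) = (k:ℂ) * ((k:ℂ)-1) / 2 := by
      have := choose_fac k 2
      simp [Finset.prod_range_succ, Nat.factorial] at this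
      field_simp
      linear_combination this
    have c3 : (k.choose 3 : ℂ) = (k:ℂ) * ((k:ℂ)-1) * ((k:ℂ)-2) / 6 := by
      have := choose_fac k 3
      simp [Finset.prod_range_succ, Nat.factorial] at this
      field_simp
      linear_combination this
    have c4 : (k.choose 4 : ℂ) = (k:ℂ) * ((k:ℂ)-1) * ((k:ℂ)-2) * ((k:ℂ)-3) / 24 := by
      have := choose_fac k 4
      simp [Finset.prod_range_succ, Nat.factorial] at this
      field_simp
      linear_combination this
    have c5 : (k.choose 5 : ℂ) = (k:ℂ) * ((k:ℂ)-1) * ((k:ℂ)-2) * ((k:ℂ)-3) * ((k:ℂ)-4) / 120 := by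
      have := choose_fac k 5
      simp [Finset.prod_range_succ, Nat.factorial] at this
      field_simp
      linear_combination this
    have d1 : (k.choose 2 : ℂ) / k = ((k:ℂ)-1)/2 := by rw [c2]; field_simp
    have d2 : (k.choose 3 : ℂ) / k = ((k:ℂ)-1)*((k:ℂ)-2)/6 := by rw [c3]; field_simp
    have d3 : (k.choose 4 : ℂ) / k = ((k:ℂ)-1)*((k:ℂ)-2)*((k:ℂ)-3)/24 := by
      rw [c4]; field_simp
    have d4 : (k.choose 5 : ℂ) / k = ((k:ℂ)-1)*((k:ℂ)-2)*((k:ℂ)-3)*((k:ℂ)-4)/120 := by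
      rw [c5]; field_simp
    rw [d1, d2, d3, d4]
    push_cast
    ring
  exact_mod_cast main
end

section
/- For every integer k ≥ 2, the sum over j from 1 to k−1 of 1/sin⁶(jπ/k) equals 2(k⁶−1)/945 + (k⁴−1)/45 + 8(k²−1)/45. -/
set_option maxHeartbeats 2000000
open Real Polynomial Finset

noncomputable def zz (k : ℕ) : ℂ := Complex.exp (2 * Real.pi * Complex.I / k)

lemma cycl_prod (k : ℕ) (hk : 2 ≤ k) :
    ∏ j ∈ Icc 1 (k-1), (X - C ((zz k) ^ j)) = ∑ i ∈ range k, (X:ℂ[X]) ^ i := by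
  have hk0 : (k:ℕ) ≠ 0 := by omega
  have hζ := Complex.isPrimitiveRoot_exp k hk0
  have h1 : (X:ℂ[X]) ^ k - C 1 = ∏ i ∈ range k, (X - C ((zz k) ^ i * 1)) :=
    X_pow_sub_C_eq_prod hζ (by omega) (one_pow k)
  simp only [mul_one] at h1
  have hins : range k = insert 0 (Icc 1 (k-1)) := by
    ext j; simp only [Finset.mem_range, Finset.mem_insert, Finset.mem_Icc]; omega
  rw [hins, Finset.prod_insert (by simp)] at h1
  have h2 : (∑ i ∈ range k, (X:ℂ[X])^i) * (X - 1) = X^k - 1 := geom_sum_mul X k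
  apply mul_left_cancel₀ (X_sub_C_ne_zero (1:ℂ))
  have h3 : (X:ℂ[X]) - C (zz k ^ 0) = X - C 1 := by norm_num
  rw [← h3, ← h1, h3, map_one, ← h2]
  ring

lemma k_prod (k : ℕ) (hk : 2 ≤ k) : ∏ j ∈ Icc 1 (k-1), (1 - (zz k)^j) = (k:ℂ) := by
  have := congrArg (Polynomial.eval 1) (cycl_prod k hk)
  simpa [Polynomial.eval_prod] using this

lemma main_poly (k : ℕ) (hk : 2 ≤ k) :
    C (k:ℂ) * ∏ j ∈ Icc 1 (k-1), (X - C ((1 - (zz k)^j)⁻¹)) = X^k - (X - 1)^k := by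
  have hne : ∀ j ∈ Icc 1 (k-1), 1 - (zz k)^j ≠ 0 := by
    intro j hj
    have hζ := Complex.isPrimitiveRoot_exp k (by omega : (k:ℕ) ≠ 0)
    simp only [Finset.mem_Icc] at hj
    have h2 := hζ.pow_ne_one_of_pos_of_lt (by omega : j ≠ 0) (by omega : j < k)
    exact sub_ne_zero.mpr fun h => h2 h.symm
  apply Polynomial.funext
  intro x
  simp only [Polynomial.eval_mul, Polynomial.eval_prod, Polynomial.eval_sub,
    Polynomial.eval_pow, Polynomial.eval_X, Polynomial.eval_one, Polynomial.eval_C]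
  rw [← k_prod k hk, ← Finset.prod_mul_distrib]
  have hfac : ∀ j ∈ Icc 1 (k-1), (1 - zz k ^ j) * (x - (1 - zz k ^ j)⁻¹)
      = (1 - zz k ^ j) * x - 1 := by
    intro j hj
    have := hne j hj
    field_simp
  rw [Finset.prod_congr rfl hfac]
  have hcard : (Icc 1 (k-1)).card = k - 1 := by rw [Nat.card_Icc]; omega
  by_cases hx : x = (0:ℂ)
  · subst hx
    simp only [mul_zero, zero_sub, Finset.prod_const, hcard]
    rw [zero_pow (by omega : k ≠ 0)]
    have hk' : k = (k-1)+1 := by omega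
    rw [hk', pow_succ, Nat.add_sub_cancel]
    ring
  · have hstep : ∀ j ∈ Icc 1 (k-1), (1 - zz k ^ j) * x - 1 = x * ((x-1)/x - zz k ^ j) := by
      intro j hj; field_simp; ring
    rw [Finset.prod_congr rfl hstep, Finset.prod_mul_distrib, Finset.prod_const, hcard]
    have hcy := congrArg (Polynomial.eval ((x-1)/x)) (cycl_prod k hk)
    simp only [Polynomial.eval_prod, Polynomial.eval_finset_sum, Polynomial.eval_sub,
      Polynomial.eval_pow, Polynomial.eval_X, Polynomial.eval_C] at hcy
    rw [hcy, Finset.mul_sum]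
    have hterm : ∀ i ∈ range k, x^(k-1) * ((x-1)/x)^i = (x-1)^i * x^(k-1-i) := by
      intro i hi
      simp only [Finset.mem_range] at hi
      rw [div_pow]
      field_simp
      have pow_eq : x^(k-1-i) * x^i = x^(k-1) := by
        rw [← pow_add]; congr 1; omega
      linear_combination (-(x-1)^i) * pow_eq
    rw [Finset.sum_congr rfl hterm]
    have hg := geom_sum₂_mul (x-1) x k
    have he : (x-1) - x = -1 := by ring
    rw [he] at hg
    linear_combination -hg

noncomputable def vv (k : ℕ) (i : Fin (k-1)) : ℂ := (1 - zz k ^ ((i:ℕ)+1))⁻¹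
noncomputable def EE (k m : ℕ) : ℂ := Multiset.esymm (Finset.univ.val.map (vv k)) m
noncomputable def PP (k m : ℕ) : ℂ := ∑ i : Fin (k-1), (vv k i)^m

lemma icc_reindex_prod {M : Type*} [CommMonoid M] (k : ℕ) (f : ℕ → M) :
    ∏ j ∈ Icc 1 (k-1), f j = ∏ i : Fin (k-1), f ((i:ℕ)+1) := by
  have h : Icc 1 (k-1) = Finset.image (fun i => i+1) (range (k-1)) := by
    ext j; simp only [Finset.mem_Icc, Finset.mem_image, Finset.mem_range]
    constructor
    · intro hj; exact ⟨j-1, by omega, by omega⟩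
    · rintro ⟨a, ha, rfl⟩; omega
  rw [h, Finset.prod_image (by intro a _ b _ hab; simp only at hab; omega), ← Fin.prod_univ_eq_prod_range (fun i => f (i+1))]

-- choose cast lemma
lemma choose_cast_prod (k m : ℕ) :
    (Nat.choose k m : ℂ) * (Nat.factorial m : ℂ) = ∏ i ∈ range m, ((k:ℂ) - i) := by
  by_cases h : m ≤ k
  · have h1 : (Nat.descFactorial k m : ℂ) = ∏ i ∈ range m, ((k:ℂ) - i) := by
      rw [Nat.descFactorial_eq_prod_range]
      push_cast
      apply Finset.prod_congr rfl
      intro i hi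
      simp only [Finset.mem_range] at hi
      have : i ≤ k := by omega
      push_cast [Nat.cast_sub this]
      ring
    rw [← h1, Nat.descFactorial_eq_factorial_mul_choose]
    push_cast; ring
  · rw [Nat.choose_eq_zero_of_lt (by omega)]
    rw [eq_comm]
    simp only [Nat.cast_zero, zero_mul]
    apply Finset.prod_eq_zero (Finset.mem_range.mpr (by omega : k < m))
    simp

lemma EE_val (k m : ℕ) (hk : 2 ≤ k) : (k:ℂ) * EE k m = (Nat.choose k (m+1) : ℂ) := by
  by_cases hm : m ≤ k - 1
  · have hP : C (k:ℂ) * ∏ i : Fin (k-1), (X - C (vv k i)) = X^k - (X-1)^k := by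
      have := main_poly k hk
      rw [icc_reindex_prod k (fun j => X - C ((1 - zz k ^ j)⁻¹))] at this
      simpa [vv] using this
    have hc := congrArg (fun p => Polynomial.coeff p (k-1-m)) hP
    simp only [coeff_C_mul] at hc
    have hmp : (∏ i : Fin (k-1), (X - C (vv k i)))
        = ((Finset.univ.val.map (vv k)).map (fun t => X - C t)).prod := by
      rw [Finset.prod_eq_multiset_prod, Multiset.map_map]; rfl
    have hcard : Multiset.card (Finset.univ.val.map (vv k)) = k - 1 := by simp
    have hv := Multiset.prod_X_sub_C_coeff (Finset.univ.val.map (vv k)) (k := k-1-m)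
      (by rw [hcard]; omega)
    rw [hcard] at hv
    rw [(by omega : k - 1 - (k-1-m) = m)] at hv
    rw [hmp, hv] at hc
    have hrx : ((X:ℂ[X])^k).coeff (k-1-m) = 0 := by
      rw [coeff_X_pow]; simp only [if_neg (by omega : ¬ (k-1-m = k))]
    have hx1 : ((X:ℂ[X]) - 1) = X + C (-1) := by simp [sub_eq_add_neg]
    have hrc : (((X:ℂ[X]) - 1)^k).coeff (k-1-m) = (-1)^(m+1) * (Nat.choose k (m+1) : ℂ) := by
      rw [hx1, coeff_X_add_C_pow]
      rw [(by omega : k - (k-1-m) = m+1)]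
      rw [(by omega : k-1-m = k - (m+1)), Nat.choose_symm (by omega : m+1 ≤ k)]
    rw [coeff_sub, hrx, hrc] at hc
    have hne : ((-1:ℂ))^m ≠ 0 := pow_ne_zero _ (by norm_num)
    apply mul_left_cancel₀ hne
    rw [EE]
    linear_combination hc
  · have h1 : EE k m = 0 := by
      rw [EE, Multiset.esymm, Multiset.powersetCard_eq_empty m (by simpa using (by omega : k - 1 < m))]
      simp
    rw [h1, Nat.choose_eq_zero_of_lt (by omega), mul_zero, Nat.cast_zero]

lemma newton (k m : ℕ) (hm : 0 < m) :
    PP k m = (-1)^(m+1) * m * EE k m -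
      ∑ a ∈ (Finset.HasAntidiagonal.antidiagonal m).filter (fun a => a.1 ∈ Set.Ioo 0 m),
        (-1)^a.1 * EE k a.1 * PP k a.2 := by
  have hN := MvPolynomial.psum_eq_mul_esymm_sub_sum (Fin (k-1)) ℂ m hm
  have h2 := congrArg (MvPolynomial.aeval (vv k)) hN
  simp only [map_sub, map_mul, map_sum, MvPolynomial.aeval_esymm_eq_multiset_esymm] at h2
  simpa [PP, EE, MvPolynomial.psum, map_sum, MvPolynomial.aeval_esymm_eq_multiset_esymm] using h2



lemma key_exp (θ : ℂ) : (1 - Complex.exp (2*θ*Complex.I))^2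
    = -4 * Complex.exp (2*θ*Complex.I) * (Complex.sin θ)^2 := by
  rw [Complex.sin]
  have h2 : Complex.exp (2*θ*Complex.I) = Complex.exp (θ*Complex.I) * Complex.exp (θ*Complex.I) := by
    rw [← Complex.exp_add]; ring_nf
  have hneg : Complex.exp (-θ*Complex.I) = (Complex.exp (θ*Complex.I))⁻¹ := by
    rw [← Complex.exp_neg]; ring_nf
  rw [h2, hneg]
  have hE := Complex.exp_ne_zero (θ*Complex.I)
  field_simp
  linear_combination (4 - 8*Complex.exp (θ*Complex.I)^2
    + 4*Complex.exp (θ*Complex.I)^4) * Complex.I_sq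

lemma bridge (k j : ℕ) (hk : 2 ≤ k) (hj1 : 1 ≤ j) (hj2 : j ≤ k-1) :
    ((1 / Real.sin ((j:ℝ) * Real.pi / k) ^ 6 : ℝ) : ℂ)
      = 64 * ((1 - zz k ^ j)⁻¹ - ((1 - zz k ^ j)⁻¹)^2)^3 := by
  set θ : ℝ := (j:ℝ) * Real.pi / k with hθ
  have hkR : (0:ℝ) < k := by exact_mod_cast (by omega : 0 < k)
  have hθpos : 0 < θ := by
    apply div_pos (mul_pos _ Real.pi_pos) hkR
    exact_mod_cast hj1
  have hθlt : θ < Real.pi := by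
    rw [hθ, div_lt_iff₀ hkR]
    have hjk : (j:ℝ) < k := by exact_mod_cast (by omega : j < k)
    nlinarith [Real.pi_pos]
  have hs := Real.sin_pos_of_pos_of_lt_pi hθpos hθlt
  have hsne : Real.sin θ ≠ 0 := ne_of_gt hs
  have hsC : ((Real.sin θ : ℝ) : ℂ) ≠ 0 := by exact_mod_cast hsne
  have hkC : (k:ℂ) ≠ 0 := by exact_mod_cast (by omega : (k:ℕ) ≠ 0)
  have hzj : zz k ^ j = Complex.exp (2*(θ:ℂ)*Complex.I) := by
    rw [zz, ← Complex.exp_nat_mul]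
    congr 1
    push_cast [hθ]
    field_simp
  have hkey := key_exp (θ:ℂ)
  rw [← hzj, ← Complex.ofReal_sin] at hkey
  have hZne : zz k ^ j ≠ 0 := by rw [hzj]; exact Complex.exp_ne_zero _
  have h1Z : (1:ℂ) - zz k ^ j ≠ 0 := by
    have hζ := Complex.isPrimitiveRoot_exp k (by omega : (k:ℕ) ≠ 0)
    exact sub_ne_zero.mpr fun h => (hζ.pow_ne_one_of_pos_of_lt (by omega) (by omega)) h.symm
  have hv1 : (1 - zz k ^ j)⁻¹ - ((1 - zz k ^ j)⁻¹)^2 = -(zz k ^ j) / (1 - zz k ^ j)^2 := by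
    field_simp
    ring
  have hv : (1 - zz k ^ j)⁻¹ - ((1 - zz k ^ j)⁻¹)^2 = ((4:ℂ) * ((Real.sin θ : ℝ):ℂ)^2)⁻¹ := by
    have hsC2 : Complex.sin ((θ:ℝ):ℂ) ≠ 0 := by rw [← Complex.ofReal_sin]; exact hsC
    rw [hv1, hkey]
    field_simp
  rw [hv]
  push_cast
  field_simp
  ring


lemma icc_reindex_sum {M : Type*} [AddCommMonoid M] (k : ℕ) (f : ℕ → M) :
    ∑ j ∈ Icc 1 (k-1), f j = ∑ i : Fin (k-1), f ((i:ℕ)+1) := by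
  have h : Icc 1 (k-1) = Finset.image (fun i => i+1) (range (k-1)) := by
    ext j; simp only [Finset.mem_Icc, Finset.mem_image, Finset.mem_range]
    constructor
    · intro hj; exact ⟨j-1, by omega, by omega⟩
    · rintro ⟨a, ha, rfl⟩; omega
  rw [h, Finset.sum_image (by intro a _ b _ hab; simp only at hab; omega),
    ← Fin.sum_univ_eq_sum_range (fun i => f (i+1))]

lemma newton1 (k : ℕ) : PP k 1 = EE k 1 := by
  rw [newton k 1 (by norm_num), Finset.sum_filter, Finset.Nat.sum_antidiagonal_eq_sum_range_succ_mk]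
  norm_num [Finset.sum_range_succ]

lemma newton2 (k : ℕ) : PP k 2 = EE k 1 * PP k 1 - 2 * EE k 2 := by
  rw [newton k 2 (by norm_num), Finset.sum_filter, Finset.Nat.sum_antidiagonal_eq_sum_range_succ_mk]
  norm_num [Finset.sum_range_succ]
  ring

lemma newton3 (k : ℕ) : PP k 3 = EE k 1 * PP k 2 - EE k 2 * PP k 1 + 3 * EE k 3 := by
  rw [newton k 3 (by norm_num), Finset.sum_filter, Finset.Nat.sum_antidiagonal_eq_sum_range_succ_mk]
  norm_num [Finset.sum_range_succ]
  ring

lemma newton4 (k : ℕ) : PP k 4 = EE k 1 * PP k 3 - EE k 2 * PP k 2 + EE k 3 * PP k 1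
    - 4 * EE k 4 := by
  rw [newton k 4 (by norm_num), Finset.sum_filter, Finset.Nat.sum_antidiagonal_eq_sum_range_succ_mk]
  norm_num [Finset.sum_range_succ]
  ring

lemma newton5 (k : ℕ) : PP k 5 = EE k 1 * PP k 4 - EE k 2 * PP k 3 + EE k 3 * PP k 2
    - EE k 4 * PP k 1 + 5 * EE k 5 := by
  rw [newton k 5 (by norm_num), Finset.sum_filter, Finset.Nat.sum_antidiagonal_eq_sum_range_succ_mk]
  norm_num [Finset.sum_range_succ]
  ring

lemma newton6 (k : ℕ) : PP k 6 = EE k 1 * PP k 5 - EE k 2 * PP k 4 + EE k 3 * PP k 3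
    - EE k 4 * PP k 2 + EE k 5 * PP k 1 - 6 * EE k 6 := by
  rw [newton k 6 (by norm_num), Finset.sum_filter, Finset.Nat.sum_antidiagonal_eq_sum_range_succ_mk]
  norm_num [Finset.sum_range_succ]
  ring

lemma EE_closed (k m : ℕ) (hk : 2 ≤ k) :
    EE k m = (∏ i ∈ range m, ((k:ℂ) - ((i:ℕ)+1))) / ((Nat.factorial (m+1) : ℕ) : ℂ) := by
  have hK : (k:ℂ) ≠ 0 := by exact_mod_cast (by omega : (k:ℕ) ≠ 0)
  have hfac : ((Nat.factorial (m+1) : ℕ):ℂ) ≠ 0 := by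
    exact_mod_cast Nat.factorial_ne_zero (m+1)
  rw [eq_div_iff hfac]
  apply mul_left_cancel₀ hK
  rw [← mul_assoc, EE_val k m hk, choose_cast_prod k (m+1), Finset.prod_range_succ']
  push_cast
  ring

theorem stmt_2 (k : ℕ) (hk : 2 ≤ k) :
    ∑ j ∈ Finset.Icc 1 (k - 1), (1 / Real.sin (j * Real.pi / k) ^ 6)
      = 2 * ((k : ℝ) ^ 6 - 1) / 945 + ((k : ℝ) ^ 4 - 1) / 45
        + 8 * ((k : ℝ) ^ 2 - 1) / 45 := by
  have hK : ((k:ℂ)) ≠ 0 := by exact_mod_cast (by omega : (k:ℕ) ≠ 0)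
  set K : ℂ := (k:ℂ) with hKdef
  have e1 : EE k 1 = (K-1)/2 := by
    rw [EE_closed k 1 hk]; norm_num [Finset.prod_range_succ, Nat.factorial]; rw [hKdef]
  have e2 : EE k 2 = (K-1)*(K-2)/6 := by
    rw [EE_closed k 2 hk]; norm_num [Finset.prod_range_succ, Nat.factorial]; rw [hKdef]
  have e3 : EE k 3 = (K-1)*(K-2)*(K-3)/24 := by
    rw [EE_closed k 3 hk]; norm_num [Finset.prod_range_succ, Nat.factorial]; rw [hKdef]
  have e4 : EE k 4 = (K-1)*(K-2)*(K-3)*(K-4)/120 := by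
    rw [EE_closed k 4 hk]; norm_num [Finset.prod_range_succ, Nat.factorial]; rw [hKdef]
  have e5 : EE k 5 = (K-1)*(K-2)*(K-3)*(K-4)*(K-5)/720 := by
    rw [EE_closed k 5 hk]; norm_num [Finset.prod_range_succ, Nat.factorial]; rw [hKdef]
  have e6 : EE k 6 = (K-1)*(K-2)*(K-3)*(K-4)*(K-5)*(K-6)/5040 := by
    rw [EE_closed k 6 hk]; norm_num [Finset.prod_range_succ, Nat.factorial]; rw [hKdef]
  have p1 : PP k 1 = (K-1)/2 := by rw [newton1, e1]
  have p2 : PP k 2 = (-(K^2) + 6*K - 5)/12 := by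
    rw [newton2, e1, e2, p1]; field_simp; ring
  have p3 : PP k 3 = (-(K^2) + 4*K - 3)/8 := by
    rw [newton3, e1, e2, e3, p1, p2]; field_simp; ring
  have p4 : PP k 4 = (K^4 - 110*K^2 + 360*K - 251)/720 := by
    rw [newton4, e1, e2, e3, e4, p1, p2, p3]; field_simp; ring
  have p5 : PP k 5 = (K^4 - 50*K^2 + 144*K - 95)/288 := by
    rw [newton5, e1, e2, e3, e4, e5, p1, p2, p3, p4]; field_simp; ring
  have p6 : PP k 6 = (-2*K^6 + 357*K^4 - 11508*K^2 + 30240*K - 19087)/60480 := by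
    rw [newton6, e1, e2, e3, e4, e5, e6, p1, p2, p3, p4, p5]; field_simp; ring
  have hre := icc_reindex_sum k (fun j : ℕ => 1 / Real.sin ((j:ℝ) * Real.pi / (k:ℝ)) ^ 6)
  have hterm : ∀ i : Fin (k-1), ((1 / Real.sin ((((i:ℕ)+1 : ℕ):ℝ) * Real.pi / k) ^ 6 : ℝ) : ℂ)
      = 64 * (vv k i - (vv k i)^2)^3 := by
    intro i
    have hb := bridge k ((i:ℕ)+1) hk (by omega) (by have := i.isLt; omega)
    simpa [vv] using hb
  have hsum : ∑ i : Fin (k-1), (64 * (vv k i - (vv k i)^2)^3 : ℂ)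
      = 64*PP k 3 - 192*PP k 4 + 192*PP k 5 - 64*PP k 6 := by
    simp only [PP, Finset.mul_sum, ← Finset.sum_sub_distrib, ← Finset.sum_add_distrib]
    exact Finset.sum_congr rfl fun i _ => by ring
  apply Complex.ofReal_injective
  rw [hre, Complex.ofReal_sum, Finset.sum_congr rfl (fun i _ => hterm i), hsum,
    p3, p4, p5, p6]
  push_cast
  field_simp
  ring
end

section
/- Let k ≥ 2 be an integer and define, for j = 1, …, k−1, the numbers s_j := sin(jπ/k). Then (1/k)·∑_{j=1}^{k−1} [ 12/(64·s_j⁶) − 2/(16·s_j⁴) ] = (1/2520)(k⁵ − 1/k) + (1/720)(k³ − 1/k) + (1/180)(k − 1/k), and (1/k)·∑_{j=1}^{k−1} [ 2/(64·s_j⁶) ] = (1/15120)(k⁵ − 1/k) + (1/1440)(k³ − 1/k) + (1/180)(k − 1/k). -/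
open Polynomial Finset

noncomputable def ttC (ω : ℂ) : ℂ := (1 - ω)⁻¹

namespace Stmt7Aux

variable {k : ℕ}

lemma geomprod (hk : 2 ≤ k) :
    ∏ ω ∈ (nthRootsFinset k (1 : ℂ)).erase 1, (X - C ω) = ∑ i ∈ range k, (X : ℂ[X]) ^ i := by
  have h := Complex.isPrimitiveRoot_exp k (by omega)
  have h1 : (1 : ℂ) ∈ nthRootsFinset k (1 : ℂ) := one_mem_nthRootsFinset (by omega)
  have h2 := X_pow_sub_one_eq_prod (R := ℂ) (by omega : 0 < k) h
  rw [Finset.mul_prod_erase _ _ h1 |>.symm] at h2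
  have h3 : (X : ℂ[X]) ^ k - 1 = (X - C 1) * ∑ i ∈ range k, (X : ℂ[X]) ^ i := by
    rw [mul_comm, C_1, geom_sum_mul]
  apply mul_left_cancel₀ (X_sub_C_ne_zero 1)
  rw [← h2, h3]

lemma prod_one_sub (hk : 2 ≤ k) : ∏ ω ∈ (nthRootsFinset k (1 : ℂ)).erase 1, (1 - ω) = (k : ℂ) := by
  have := congrArg (Polynomial.eval 1) (geomprod hk)
  simpa [eval_prod] using this

lemma card_erase (hk : 2 ≤ k) : ((nthRootsFinset k (1 : ℂ)).erase 1).card = k - 1 := by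
  have h := Complex.isPrimitiveRoot_exp k (by omega)
  rw [Finset.card_erase_of_mem (one_mem_nthRootsFinset (by omega)), h.card_nthRootsFinset]

lemma prod_two_var (hk : 2 ≤ k) (x y : ℂ) :
    (x - y) * ∏ ω ∈ (nthRootsFinset k (1 : ℂ)).erase 1, (x - ω * y) = x ^ k - y ^ k := by
  have h := Complex.isPrimitiveRoot_exp k (by omega)
  have h1 : (1 : ℂ) ∈ nthRootsFinset k (1 : ℂ) := one_mem_nthRootsFinset (by omega)
  have h2 := h.pow_sub_pow_eq_prod_sub_mul x y (by omega : 0 < k)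
  rw [Finset.mul_prod_erase _ _ h1 |>.symm, one_mul] at h2
  exact h2.symm

lemma prod_t (hk : 2 ≤ k) (x : ℂ) :
    ∏ ω ∈ (nthRootsFinset k (1 : ℂ)).erase 1, (x - ttC ω) = (x ^ k - (x - 1) ^ k) / k := by
  have hω : ∀ ω ∈ (nthRootsFinset k (1 : ℂ)).erase 1, (1 : ℂ) - ω ≠ 0 := by
    intro ω hω
    have := Finset.ne_of_mem_erase hω
    intro h0
    exact this (by linear_combination -h0)
  have step : ∀ ω ∈ (nthRootsFinset k (1 : ℂ)).erase 1,
      x - ttC ω = ((x - 1) - ω * x) * (1 - ω)⁻¹ := by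
    intro ω hm
    have h1 := hω ω hm
    unfold ttC
    field_simp
    ring
  rw [Finset.prod_congr rfl step, Finset.prod_mul_distrib]
  have hinv : ∏ ω ∈ (nthRootsFinset k (1 : ℂ)).erase 1, (1 - ω)⁻¹ = ((k : ℂ))⁻¹ := by
    rw [← prod_one_sub hk, ← Finset.prod_inv_distrib]
  rw [hinv]
  have h2 := prod_two_var hk (x - 1) x
  have h3 : (x : ℂ) - 1 - x = -1 := by ring
  rw [h3] at h2
  have h4 : ∏ ω ∈ (nthRootsFinset k (1 : ℂ)).erase 1, (x - 1 - ω * x) = x ^ k - (x - 1) ^ k := by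
    linear_combination -h2
  rw [h4, div_eq_mul_inv]

lemma poly_t (hk : 2 ≤ k) :
    ∏ ω ∈ (nthRootsFinset k (1 : ℂ)).erase 1, (X - C (ttC ω))
      = C ((k : ℂ))⁻¹ * (X ^ k - (X - 1) ^ k) := by
  apply Polynomial.funext
  intro x
  rw [eval_prod]
  simp only [eval_mul, eval_C, eval_sub, eval_pow, eval_X, eval_one]
  rw [prod_t hk x, div_eq_inv_mul]

lemma esymm_t (hk : 2 ≤ k) {m : ℕ} (hm : 1 ≤ m) :
    (((nthRootsFinset k (1 : ℂ)).erase 1).val.map ttC).esymm m = (k.choose (m + 1) : ℂ) / k := by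
  have hcard : Multiset.card (((nthRootsFinset k (1 : ℂ)).erase 1).val.map ttC) = k - 1 := by
    rw [Multiset.card_map]; exact card_erase hk
  by_cases hmk : m ≤ k - 1
  · have hv := Multiset.prod_X_sub_C_coeff (((nthRootsFinset k (1 : ℂ)).erase 1).val.map ttC)
      (show k - 1 - m ≤ _ by rw [hcard]; omega)
    rw [hcard] at hv
    have hl : ((((nthRootsFinset k (1 : ℂ)).erase 1).val.map ttC).map fun t => X - C t).prod
        = ∏ ω ∈ (nthRootsFinset k (1 : ℂ)).erase 1, (X - C (ttC ω)) := by
      rw [Multiset.map_map]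
      rfl
    rw [hl, poly_t hk] at hv
    have hco : (C ((k : ℂ))⁻¹ * ((X : ℂ[X]) ^ k - (X - 1) ^ k)).coeff (k - 1 - m)
        = -((k:ℂ))⁻¹ * ((-1) ^ (m + 1) * (k.choose (m + 1) : ℂ)) := by
      rw [coeff_C_mul, coeff_sub, coeff_X_pow, if_neg (by omega)]
      have hX : ((X : ℂ[X]) - 1) ^ k = (X + C (-1)) ^ k := by
        ring_nf; rw [map_neg, C_1]; ring
      rw [hX, coeff_X_add_C_pow]
      have h1 : k - (k - 1 - m) = m + 1 := by omega
      have h2 : k.choose (k - 1 - m) = k.choose (m + 1) := by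
        have h2' : k - 1 - m = k - (m + 1) := by omega
        rw [h2', Nat.choose_symm (by omega)]
      rw [h1, h2]
      ring
    rw [hco] at hv
    have h3 : k - 1 - (k - 1 - m) = m := by omega
    rw [h3] at hv
    have hne : ((-1 : ℂ)) ^ m ≠ 0 := pow_ne_zero _ (by norm_num)
    apply mul_left_cancel₀ hne
    rw [← hv]
    have hk0 : (k : ℂ) ≠ 0 := Nat.cast_ne_zero.mpr (by omega)
    field_simp
    ring
  · rw [Multiset.esymm, Multiset.powersetCard_eq_empty m (by rw [hcard]; omega)]
    rw [Nat.choose_eq_zero_of_lt (by omega)]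
    simp

lemma newton_num (s : Finset ℂ) (f : ℂ → ℂ) (m : ℕ) (hm : 0 < m) :
    ∑ ω ∈ s, f ω ^ m = (-1) ^ (m + 1) * m * (s.val.map f).esymm m -
      ∑ a ∈ (Finset.HasAntidiagonal.antidiagonal m).filter (fun a => a.1 ∈ Set.Ioo 0 m),
        (-1) ^ a.1 * (s.val.map f).esymm a.1 * ∑ ω ∈ s, f ω ^ a.2 := by
  classical
  have key := MvPolynomial.psum_eq_mul_esymm_sub_sum {x // x ∈ s} ℂ m hm
  have happ := congrArg (MvPolynomial.aeval (fun i : {x // x ∈ s} => f i.val)) key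
  have hps : ∀ n, MvPolynomial.aeval (fun i : {x // x ∈ s} => f i.val)
      (MvPolynomial.psum {x // x ∈ s} ℂ n) = ∑ ω ∈ s, f ω ^ n := by
    intro n
    simp only [MvPolynomial.psum, map_sum, map_pow, MvPolynomial.aeval_X]
    rw [← Finset.sum_attach s (fun ω => f ω ^ n)]
    rfl
  have hes : ∀ n, MvPolynomial.aeval (fun i : {x // x ∈ s} => f i.val)
      (MvPolynomial.esymm {x // x ∈ s} ℂ n) = (s.val.map f).esymm n := by
    intro n
    rw [MvPolynomial.aeval_esymm_eq_multiset_esymm]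
    congr 1
    have huniv : (Finset.univ : Finset {x // x ∈ s}) = s.attach := rfl
    rw [huniv, Finset.attach_val]
    exact Multiset.attach_map_val' _ _
  rw [hps] at happ
  rw [happ, map_sub, map_mul, map_mul, map_pow, map_neg, map_one, hes, map_sum]
  congr 1
  · norm_num
  · apply Finset.sum_congr rfl
    intro a _
    rw [map_mul, map_mul, map_pow, map_neg, map_one, hes, hps]

lemma choose_cast_expand (r k : ℕ) :
    ((k.choose r : ℂ)) * ((r.factorial : ℕ) : ℂ) = (descPochhammer ℂ r).eval (k : ℂ) := by
  rw [descPochhammer_eval_eq_descFactorial, Nat.descFactorial_eq_factorial_mul_choose]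
  push_cast
  ring

-- explicit choose casts
lemma ch2 (k : ℕ) : (k.choose 2 : ℂ) = (k:ℂ) * ((k:ℂ)-1) / 2 := by
  have := choose_cast_expand 2 k
  simp [descPochhammer_succ_eval] at this
  norm_num [Nat.factorial] at this
  field_simp
  linear_combination this

lemma ch3 (k : ℕ) : (k.choose 3 : ℂ) = (k:ℂ) * ((k:ℂ)-1) * ((k:ℂ)-2) / 6 := by
  have := choose_cast_expand 3 k
  simp [descPochhammer_succ_eval] at this
  norm_num [Nat.factorial] at this
  field_simp
  linear_combination this

lemma ch4 (k : ℕ) : (k.choose 4 : ℂ) = (k:ℂ) * ((k:ℂ)-1) * ((k:ℂ)-2) * ((k:ℂ)-3) / 24 := by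
  have := choose_cast_expand 4 k
  simp [descPochhammer_succ_eval] at this
  norm_num [Nat.factorial] at this
  field_simp
  linear_combination this

lemma ch5 (k : ℕ) : (k.choose 5 : ℂ)
    = (k:ℂ) * ((k:ℂ)-1) * ((k:ℂ)-2) * ((k:ℂ)-3) * ((k:ℂ)-4) / 120 := by
  have := choose_cast_expand 5 k
  simp [descPochhammer_succ_eval] at this
  norm_num [Nat.factorial] at this
  field_simp
  linear_combination this

lemma ch6 (k : ℕ) : (k.choose 6 : ℂ)
    = (k:ℂ) * ((k:ℂ)-1) * ((k:ℂ)-2) * ((k:ℂ)-3) * ((k:ℂ)-4) * ((k:ℂ)-5) / 720 := by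
  have := choose_cast_expand 6 k
  simp [descPochhammer_succ_eval] at this
  norm_num [Nat.factorial] at this
  field_simp
  linear_combination this

lemma ch7 (k : ℕ) : (k.choose 7 : ℂ)
    = (k:ℂ) * ((k:ℂ)-1) * ((k:ℂ)-2) * ((k:ℂ)-3) * ((k:ℂ)-4) * ((k:ℂ)-5) * ((k:ℂ)-6) / 5040 := by
  have := choose_cast_expand 7 k
  simp [descPochhammer_succ_eval] at this
  norm_num [Nat.factorial] at this
  field_simp
  linear_combination this


lemma E1x (hk : 2 ≤ k) : (k.choose 2 : ℂ) / (k:ℂ) = ((k:ℂ)-1)/2 := by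
  have hk0 : (k:ℂ) ≠ 0 := Nat.cast_ne_zero.mpr (by omega)
  rw [ch2]; field_simp
lemma E2x (hk : 2 ≤ k) : (k.choose 3 : ℂ) / (k:ℂ) = (((k:ℂ)-1)*((k:ℂ)-2))/6 := by
  have hk0 : (k:ℂ) ≠ 0 := Nat.cast_ne_zero.mpr (by omega)
  rw [ch3]; field_simp
lemma E3x (hk : 2 ≤ k) : (k.choose 4 : ℂ) / (k:ℂ) = (((k:ℂ)-1)*((k:ℂ)-2)*((k:ℂ)-3))/24 := by
  have hk0 : (k:ℂ) ≠ 0 := Nat.cast_ne_zero.mpr (by omega)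
  rw [ch4]; field_simp
lemma E4x (hk : 2 ≤ k) : (k.choose 5 : ℂ) / (k:ℂ)
    = (((k:ℂ)-1)*((k:ℂ)-2)*((k:ℂ)-3)*((k:ℂ)-4))/120 := by
  have hk0 : (k:ℂ) ≠ 0 := Nat.cast_ne_zero.mpr (by omega)
  rw [ch5]; field_simp
lemma E5x (hk : 2 ≤ k) : (k.choose 6 : ℂ) / (k:ℂ)
    = (((k:ℂ)-1)*((k:ℂ)-2)*((k:ℂ)-3)*((k:ℂ)-4)*((k:ℂ)-5))/720 := by
  have hk0 : (k:ℂ) ≠ 0 := Nat.cast_ne_zero.mpr (by omega)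
  rw [ch6]; field_simp
lemma E6x (hk : 2 ≤ k) : (k.choose 7 : ℂ) / (k:ℂ)
    = (((k:ℂ)-1)*((k:ℂ)-2)*((k:ℂ)-3)*((k:ℂ)-4)*((k:ℂ)-5)*((k:ℂ)-6))/5040 := by
  have hk0 : (k:ℂ) ≠ 0 := Nat.cast_ne_zero.mpr (by omega)
  rw [ch7]; field_simp

lemma P1 (hk : 2 ≤ k) :
    ∑ ω ∈ (nthRootsFinset k (1 : ℂ)).erase 1, ttC ω ^ 1 = ((k:ℂ) - 1) / 2 := by
  have hk0 : (k:ℂ) ≠ 0 := Nat.cast_ne_zero.mpr (by omega)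
  have N := newton_num ((nthRootsFinset k (1 : ℂ)).erase 1) ttC 1 one_pos
  have hf : (Finset.HasAntidiagonal.antidiagonal 1).filter (fun a => a.1 ∈ Set.Ioo 0 1) = ∅ := by decide
  rw [hf, Finset.sum_empty, esymm_t hk le_rfl] at N
  rw [N, ch2 k]
  field_simp
  ring

lemma P2 (hk : 2 ≤ k) :
    ∑ ω ∈ (nthRootsFinset k (1 : ℂ)).erase 1, ttC ω ^ 2
      = (-(k:ℂ)^2 + 6*(k:ℂ) - 5) / 12 := by
  have hk0 : (k:ℂ) ≠ 0 := Nat.cast_ne_zero.mpr (by omega)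
  have N := newton_num ((nthRootsFinset k (1 : ℂ)).erase 1) ttC 2 (by norm_num)
  have hf : (Finset.HasAntidiagonal.antidiagonal 2).filter (fun a => a.1 ∈ Set.Ioo 0 2) = {(1,1)} := by decide
  rw [hf, Finset.sum_singleton] at N
  simp only [] at N
  rw [esymm_t hk le_rfl, esymm_t hk (by norm_num), P1 hk, ch2, ch3] at N
  rw [N]
  field_simp
  ring
lemma P3 (hk : 2 ≤ k) :
    ∑ ω ∈ (nthRootsFinset k (1 : ℂ)).erase 1, ttC ω ^ 3
      = (-(k:ℂ)^2 + 4*(k:ℂ) - 3) / 8 := by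
  have hk0 : (k:ℂ) ≠ 0 := Nat.cast_ne_zero.mpr (by omega)
  have N := newton_num ((nthRootsFinset k (1 : ℂ)).erase 1) ttC 3 (by norm_num)
  have hf : (Finset.HasAntidiagonal.antidiagonal 3).filter (fun a => a.1 ∈ Set.Ioo 0 3)
      = {(1,2),(2,1)} := by decide
  rw [hf, Finset.sum_insert (by decide), Finset.sum_singleton] at N
  simp only [] at N
  rw [esymm_t hk (m := 1) (by norm_num), esymm_t hk (m := 2) (by norm_num),
    esymm_t hk (m := 3) (by norm_num), P1 hk, P2 hk, E1x hk, E2x hk, E3x hk] at N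
  rw [N]
  norm_num
  ring

lemma P4 (hk : 2 ≤ k) :
    ∑ ω ∈ (nthRootsFinset k (1 : ℂ)).erase 1, ttC ω ^ 4
      = ((k:ℂ)^4 - 110*(k:ℂ)^2 + 360*(k:ℂ) - 251) / 720 := by
  have hk0 : (k:ℂ) ≠ 0 := Nat.cast_ne_zero.mpr (by omega)
  have N := newton_num ((nthRootsFinset k (1 : ℂ)).erase 1) ttC 4 (by norm_num)
  have hf : (Finset.HasAntidiagonal.antidiagonal 4).filter (fun a => a.1 ∈ Set.Ioo 0 4)
      = {(1,3),(2,2),(3,1)} := by decide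
  rw [hf, Finset.sum_insert (by decide), Finset.sum_insert (by decide),
    Finset.sum_singleton] at N
  simp only [] at N
  rw [esymm_t hk (m := 1) (by norm_num), esymm_t hk (m := 2) (by norm_num),
    esymm_t hk (m := 3) (by norm_num), esymm_t hk (m := 4) (by norm_num),
    P1 hk, P2 hk, P3 hk, E1x hk, E2x hk, E3x hk, E4x hk] at N
  rw [N]
  norm_num
  ring

lemma P5 (hk : 2 ≤ k) :
    ∑ ω ∈ (nthRootsFinset k (1 : ℂ)).erase 1, ttC ω ^ 5
      = ((k:ℂ)^4 - 50*(k:ℂ)^2 + 144*(k:ℂ) - 95) / 288 := by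
  have hk0 : (k:ℂ) ≠ 0 := Nat.cast_ne_zero.mpr (by omega)
  have N := newton_num ((nthRootsFinset k (1 : ℂ)).erase 1) ttC 5 (by norm_num)
  have hf : (Finset.HasAntidiagonal.antidiagonal 5).filter (fun a => a.1 ∈ Set.Ioo 0 5)
      = {(1,4),(2,3),(3,2),(4,1)} := by decide
  rw [hf, Finset.sum_insert (by decide), Finset.sum_insert (by decide),
    Finset.sum_insert (by decide), Finset.sum_singleton] at N
  simp only [] at N
  rw [esymm_t hk (m := 1) (by norm_num), esymm_t hk (m := 2) (by norm_num),
    esymm_t hk (m := 3) (by norm_num), esymm_t hk (m := 4) (by norm_num),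
    esymm_t hk (m := 5) (by norm_num),
    P1 hk, P2 hk, P3 hk, P4 hk, E1x hk, E2x hk, E3x hk, E4x hk, E5x hk] at N
  rw [N]
  norm_num
  ring

lemma P6 (hk : 2 ≤ k) :
    ∑ ω ∈ (nthRootsFinset k (1 : ℂ)).erase 1, ttC ω ^ 6
      = (-2*(k:ℂ)^6 + 357*(k:ℂ)^4 - 11508*(k:ℂ)^2 + 30240*(k:ℂ) - 19087) / 60480 := by
  have hk0 : (k:ℂ) ≠ 0 := Nat.cast_ne_zero.mpr (by omega)
  have N := newton_num ((nthRootsFinset k (1 : ℂ)).erase 1) ttC 6 (by norm_num)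
  have hf : (Finset.HasAntidiagonal.antidiagonal 6).filter (fun a => a.1 ∈ Set.Ioo 0 6)
      = {(1,5),(2,4),(3,3),(4,2),(5,1)} := by decide
  rw [hf, Finset.sum_insert (by decide), Finset.sum_insert (by decide),
    Finset.sum_insert (by decide), Finset.sum_insert (by decide), Finset.sum_singleton] at N
  simp only [] at N
  rw [esymm_t hk (m := 1) (by norm_num), esymm_t hk (m := 2) (by norm_num),
    esymm_t hk (m := 3) (by norm_num), esymm_t hk (m := 4) (by norm_num),
    esymm_t hk (m := 5) (by norm_num), esymm_t hk (m := 6) (by norm_num),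
    P1 hk, P2 hk, P3 hk, P4 hk, P5 hk, E1x hk, E2x hk, E3x hk, E4x hk, E5x hk, E6x hk] at N
  rw [N]
  norm_num
  ring

lemma bridge (hk : 2 ≤ k) (j : ℕ) (hj1 : 1 ≤ j) (hj2 : j ≤ k - 1) :
    ((4 * Real.sin (j * Real.pi / k) ^ 2 : ℝ) : ℂ)
        * (ttC (Complex.exp (2 * Real.pi * Complex.I / k) ^ j)
            - ttC (Complex.exp (2 * Real.pi * Complex.I / k) ^ j) ^ 2) = 1 := by
  have h := Complex.isPrimitiveRoot_exp k (by omega)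
  set a := Complex.exp (2 * Real.pi * Complex.I / k) ^ j with ha
  have ha1 : a ≠ 1 := h.pow_ne_one_of_pos_of_lt (by omega) (by omega)
  have hθ : a = Complex.exp (((2 * Real.pi * j / k : ℝ) : ℂ) * Complex.I) := by
    rw [ha, ← Complex.exp_nat_mul]
    congr 1
    push_cast
    ring
  have ha0 : a ≠ 0 := by rw [hθ]; exact Complex.exp_ne_zero _
  have hsub : (1 : ℂ) - a ≠ 0 := by
    intro h0
    exact ha1 (by linear_combination -h0)
  have hcos : a + a⁻¹ = 2 * Complex.cos ((2 * Real.pi * j / k : ℝ) : ℂ) := by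
    rw [hθ, ← Complex.exp_neg]
    rw [Complex.exp_mul_I]
    have : -(((2 * Real.pi * j / k : ℝ) : ℂ) * Complex.I)
        = (-((2 * Real.pi * j / k : ℝ) : ℂ)) * Complex.I := by ring
    rw [this, Complex.exp_mul_I, Complex.cos_neg, Complex.sin_neg]
    ring
  have hreal : (4 * Real.sin (j * Real.pi / k) ^ 2 : ℝ)
      = 2 - 2 * Real.cos (2 * Real.pi * j / k) := by
    have := Real.sin_sq_eq_half_sub (j * Real.pi / k)
    have h2 : 2 * (j * Real.pi / k) = 2 * Real.pi * j / k := by ring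
    rw [h2] at this
    linarith
  rw [hreal]
  push_cast [Complex.ofReal_cos] at hcos ⊢
  rw [show ((2:ℂ) - 2 * Complex.cos (2 * (Real.pi:ℂ) * j / k))
      = 2 - (a + a⁻¹) by rw [hcos]]
  rw [ttC]
  field_simp
  ring

lemma sum_bridge (hk : 2 ≤ k) (F : ℂ → ℂ) :
    ∑ j ∈ Finset.Icc 1 (k - 1), F (Complex.exp (2 * Real.pi * Complex.I / k) ^ j)
      = ∑ ω ∈ (nthRootsFinset k (1 : ℂ)).erase 1, F ω := by
  have h := Complex.isPrimitiveRoot_exp k (by omega)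
  have : NeZero k := ⟨by omega⟩
  apply Finset.sum_nbij (i := fun j => Complex.exp (2 * Real.pi * Complex.I / k) ^ j)
  · intro j hj
    rw [Finset.mem_Icc] at hj
    rw [Finset.mem_erase]
    constructor
    · exact h.pow_ne_one_of_pos_of_lt (by omega) (by omega)
    · rw [mem_nthRootsFinset (by omega : 0 < k), ← pow_mul, mul_comm j k, pow_mul, h.pow_eq_one,
        one_pow]
  · intro x hx y hy hxy
    rw [Finset.coe_Icc, Set.mem_Icc] at hx hy
    exact h.pow_inj (by omega) (by omega) hxy
  · intro ω hω
    rw [Finset.coe_erase, Set.mem_diff] at hω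
    obtain ⟨hω1, hω2⟩ := hω
    rw [Finset.mem_coe, mem_nthRootsFinset (by omega : 0 < k)] at hω1
    obtain ⟨i, hik, hi⟩ := h.eq_pow_of_pow_eq_one hω1
    have hi0 : i ≠ 0 := by
      rintro rfl
      apply hω2
      simp only [Set.mem_singleton_iff]
      rw [← hi, pow_zero]
    exact ⟨i, by simp [Finset.mem_Icc]; omega, hi⟩
  · intro j hj
    rfl

lemma sin_pos (hk : 2 ≤ k) (j : ℕ) (hj1 : 1 ≤ j) (hj2 : j ≤ k - 1) :
    0 < Real.sin (j * Real.pi / k) := by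
  have hjpos : (0:ℝ) < j := by exact_mod_cast (by omega : 0 < j)
  have hkpos : (0:ℝ) < k := by exact_mod_cast (by omega : 0 < k)
  have hjk : (j : ℝ) < (k : ℝ) := by exact_mod_cast (by omega : j < k)
  apply Real.sin_pos_of_pos_of_lt_pi
  · exact div_pos (mul_pos hjpos Real.pi_pos) hkpos
  · rw [div_lt_iff₀ hkpos]
    nlinarith [Real.pi_pos]

lemma A4 (hk : 2 ≤ k) :
    ∑ j ∈ Finset.Icc 1 (k - 1), (Real.sin (j * Real.pi / k) ^ 4)⁻¹
      = ((k:ℝ)^4 + 10*(k:ℝ)^2 - 11) / 45 := by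
  have hmain : ((∑ j ∈ Finset.Icc 1 (k - 1), (Real.sin (j * Real.pi / k) ^ 4)⁻¹ : ℝ) : ℂ)
      = ((((k:ℝ)^4 + 10*(k:ℝ)^2 - 11) / 45 : ℝ) : ℂ) := by
    push_cast [-Complex.ofReal_sin]
    have hterm : ∀ j ∈ Finset.Icc 1 (k - 1),
        ((Real.sin (j * Real.pi / k) : ℂ) ^ 4)⁻¹
          = 16 * (ttC (Complex.exp (2 * Real.pi * Complex.I / k) ^ j)
              - ttC (Complex.exp (2 * Real.pi * Complex.I / k) ^ j) ^ 2) ^ 2 := by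
      intro j hj
      rw [Finset.mem_Icc] at hj
      have B := bridge hk j hj.1 hj.2
      push_cast [-Complex.ofReal_sin] at B
      set S : ℂ := ((Real.sin (j * Real.pi / k) : ℝ) : ℂ) with hSdef
      set T : ℂ := ttC (Complex.exp (2 * Real.pi * Complex.I / k) ^ j)
          - ttC (Complex.exp (2 * Real.pi * Complex.I / k) ^ j) ^ 2 with hTdef
      symm
      apply eq_inv_of_mul_eq_one_left
      linear_combination (4 * S ^ 2 * T + 1) * B
    rw [Finset.sum_congr rfl hterm,
      sum_bridge hk (fun ω => 16 * (ttC ω - ttC ω ^ 2) ^ 2)]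
    have hexp : ∑ ω ∈ (nthRootsFinset k (1 : ℂ)).erase 1, 16 * (ttC ω - ttC ω ^ 2) ^ 2
        = 16 * (∑ ω ∈ (nthRootsFinset k (1 : ℂ)).erase 1, ttC ω ^ 2)
          - 32 * (∑ ω ∈ (nthRootsFinset k (1 : ℂ)).erase 1, ttC ω ^ 3)
          + 16 * (∑ ω ∈ (nthRootsFinset k (1 : ℂ)).erase 1, ttC ω ^ 4) := by
      rw [Finset.mul_sum, Finset.mul_sum, Finset.mul_sum, ← Finset.sum_sub_distrib,
        ← Finset.sum_add_distrib]
      apply Finset.sum_congr rfl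
      intro ω _
      ring
    rw [hexp, P2 hk, P3 hk, P4 hk]
    ring
  exact_mod_cast hmain

lemma A6 (hk : 2 ≤ k) :
    ∑ j ∈ Finset.Icc 1 (k - 1), (Real.sin (j * Real.pi / k) ^ 6)⁻¹
      = (2*(k:ℝ)^6 + 21*(k:ℝ)^4 + 168*(k:ℝ)^2 - 191) / 945 := by
  have hmain : ((∑ j ∈ Finset.Icc 1 (k - 1), (Real.sin (j * Real.pi / k) ^ 6)⁻¹ : ℝ) : ℂ)
      = (((2*(k:ℝ)^6 + 21*(k:ℝ)^4 + 168*(k:ℝ)^2 - 191) / 945 : ℝ) : ℂ) := by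
    push_cast [-Complex.ofReal_sin]
    have hterm : ∀ j ∈ Finset.Icc 1 (k - 1),
        ((Real.sin (j * Real.pi / k) : ℂ) ^ 6)⁻¹
          = 64 * (ttC (Complex.exp (2 * Real.pi * Complex.I / k) ^ j)
              - ttC (Complex.exp (2 * Real.pi * Complex.I / k) ^ j) ^ 2) ^ 3 := by
      intro j hj
      rw [Finset.mem_Icc] at hj
      have B := bridge hk j hj.1 hj.2
      push_cast [-Complex.ofReal_sin] at B
      set S : ℂ := ((Real.sin (j * Real.pi / k) : ℝ) : ℂ) with hSdef
      set T : ℂ := ttC (Complex.exp (2 * Real.pi * Complex.I / k) ^ j)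
          - ttC (Complex.exp (2 * Real.pi * Complex.I / k) ^ j) ^ 2 with hTdef
      symm
      apply eq_inv_of_mul_eq_one_left
      linear_combination (16 * S ^ 4 * T ^ 2 + 4 * S ^ 2 * T + 1) * B
    rw [Finset.sum_congr rfl hterm,
      sum_bridge hk (fun ω => 64 * (ttC ω - ttC ω ^ 2) ^ 3)]
    have hexp : ∑ ω ∈ (nthRootsFinset k (1 : ℂ)).erase 1, 64 * (ttC ω - ttC ω ^ 2) ^ 3
        = 64 * (∑ ω ∈ (nthRootsFinset k (1 : ℂ)).erase 1, ttC ω ^ 3)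
          - 192 * (∑ ω ∈ (nthRootsFinset k (1 : ℂ)).erase 1, ttC ω ^ 4)
          + 192 * (∑ ω ∈ (nthRootsFinset k (1 : ℂ)).erase 1, ttC ω ^ 5)
          - 64 * (∑ ω ∈ (nthRootsFinset k (1 : ℂ)).erase 1, ttC ω ^ 6) := by
      rw [Finset.mul_sum, Finset.mul_sum, Finset.mul_sum, Finset.mul_sum,
        ← Finset.sum_sub_distrib, ← Finset.sum_add_distrib, ← Finset.sum_sub_distrib]
      apply Finset.sum_congr rfl
      intro ω _
      ring
    rw [hexp, P3 hk, P4 hk, P5 hk, P6 hk]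
    ring
  exact_mod_cast hmain

end Stmt7Aux

open Real

theorem stmt_7 (k : ℕ) (hk : 2 ≤ k) (s : ℕ → ℝ)
    (hs : ∀ j, s j = Real.sin (j * Real.pi / k)) :
    ((1 : ℝ) / k) * ∑ j ∈ Finset.Icc 1 (k - 1),
        (12 / (64 * s j ^ 6) - 2 / (16 * s j ^ 4))
      = (1 / 2520) * ((k : ℝ) ^ 5 - 1 / k) + (1 / 720) * ((k : ℝ) ^ 3 - 1 / k)
        + (1 / 180) * ((k : ℝ) - 1 / k) ∧
    ((1 : ℝ) / k) * ∑ j ∈ Finset.Icc 1 (k - 1), (2 / (64 * s j ^ 6))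
      = (1 / 15120) * ((k : ℝ) ^ 5 - 1 / k) + (1 / 1440) * ((k : ℝ) ^ 3 - 1 / k)
        + (1 / 180) * ((k : ℝ) - 1 / k) := by
  have hk0 : (k : ℝ) ≠ 0 := Nat.cast_ne_zero.mpr (by omega)
  have hA4 := Stmt7Aux.A4 hk
  have hA6 := Stmt7Aux.A6 hk
  constructor
  · have hsum : ∑ j ∈ Finset.Icc 1 (k - 1), (12 / (64 * s j ^ 6) - 2 / (16 * s j ^ 4))
        = (3/16) * (∑ j ∈ Finset.Icc 1 (k - 1), (Real.sin (j * Real.pi / k) ^ 6)⁻¹)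
          - (1/8) * (∑ j ∈ Finset.Icc 1 (k - 1), (Real.sin (j * Real.pi / k) ^ 4)⁻¹) := by
      rw [Finset.mul_sum, Finset.mul_sum, ← Finset.sum_sub_distrib]
      apply Finset.sum_congr rfl
      intro j _
      rw [hs j]
      ring
    rw [hsum, hA4, hA6]
    field_simp
    ring
  · have hsum : ∑ j ∈ Finset.Icc 1 (k - 1), (2 / (64 * s j ^ 6))
        = (1/32) * (∑ j ∈ Finset.Icc 1 (k - 1), (Real.sin (j * Real.pi / k) ^ 6)⁻¹) := by
      rw [Finset.mul_sum]
      apply Finset.sum_congr rfl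
      intro j _
      rw [hs j]
      ring
    rw [hsum, hA6]
    field_simp
    ring
end

section
/- Let k ≥ 2 be an integer. Then (1/k)·∑_{j=1}^{k−1} 2/(2 − 2cos(2πj/k))² = (1/360)(k³ − 1/k) + (1/36)(k − 1/k). -/
open Real

section Aux

lemma psum1 (n : ℕ) : ∑ m ∈ Finset.range n, (m : ℝ) = n * (n - 1) / 2 := by
  induction n with
  | zero => simp
  | succ n ih => rw [Finset.sum_range_succ, ih]; push_cast; ring

lemma psum2 (n : ℕ) : ∑ m ∈ Finset.range n, (m : ℝ) ^ 2 = n * (n - 1) * (2 * n - 1) / 6 := by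
  induction n with
  | zero => simp
  | succ n ih => rw [Finset.sum_range_succ, ih]; push_cast; ring

lemma psum3 (n : ℕ) : ∑ m ∈ Finset.range n, (m : ℝ) ^ 3 = (n * (n - 1)) ^ 2 / 4 := by
  induction n with
  | zero => simp
  | succ n ih => rw [Finset.sum_range_succ, ih]; push_cast; ring

lemma psum4 (n : ℕ) : ∑ m ∈ Finset.range n, (m : ℝ) ^ 4
    = n * (n - 1) * (2 * n - 1) * (3 * n ^ 2 - 3 * n - 1) / 30 := by
  induction n with
  | zero => simp
  | succ n ih => rw [Finset.sum_range_succ, ih]; push_cast; ring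

lemma csum1 (x : ℂ) (n : ℕ) :
    (1 - x) * ∑ m ∈ Finset.range n, (m : ℂ) * x ^ m
      = (∑ m ∈ Finset.range n, x ^ m) - 1 - ((n : ℂ) - 1) * x ^ n := by
  induction n with
  | zero => simp
  | succ n ih =>
    rw [Finset.sum_range_succ, Finset.sum_range_succ]
    push_cast
    linear_combination ih

lemma csum2 (x : ℂ) (n : ℕ) :
    (1 - x) * ∑ m ∈ Finset.range n, (m : ℂ) ^ 2 * x ^ m
      = 2 * (∑ m ∈ Finset.range n, (m : ℂ) * x ^ m)
        - ((∑ m ∈ Finset.range n, x ^ m) - 1) - ((n : ℂ) - 1) ^ 2 * x ^ n := by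
  induction n with
  | zero => simp
  | succ n ih =>
    rw [Finset.sum_range_succ, Finset.sum_range_succ, Finset.sum_range_succ]
    push_cast
    linear_combination ih

lemma orth {k : ℕ} {E : ℂ} (hE : IsPrimitiveRoot E k) (N : ℕ) :
    ∑ j ∈ Finset.range k, (E ^ N) ^ j = if k ∣ N then (k : ℂ) else 0 := by
  by_cases h : k ∣ N
  · rw [if_pos h]
    have h1 : E ^ N = 1 := (hE.pow_eq_one_iff_dvd N).mpr h
    simp [h1]
  · rw [if_neg h]
    have h1 : E ^ N ≠ 1 := fun hc => h ((hE.pow_eq_one_iff_dvd N).mp hc)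
    have h2 : (E ^ N) ^ k = 1 := by
      rw [← pow_mul, mul_comm, pow_mul, hE.pow_eq_one, one_pow]
    rw [geom_sum_eq h1, h2]
    simp

end Aux

theorem stmt_9 (k : ℕ) (hk : 2 ≤ k) :
    ((1 : ℝ) / k) * ∑ j ∈ Finset.Icc 1 (k - 1),
        (2 / (2 - 2 * Real.cos (2 * Real.pi * j / k)) ^ 2)
      = (1 / 360) * ((k : ℝ) ^ 3 - 1 / k) + (1 / 36) * ((k : ℝ) - 1 / k) := by
  have hk0 : (k : ℝ) ≠ 0 := by positivity
  have hkC : (k : ℂ) ≠ 0 := Nat.cast_ne_zero.mpr (by omega)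
  -- the discrete Green's function of the cycle
  set G : ℕ → ℝ := fun m => ((k : ℝ) ^ 2 - 1 - 6 * m * ((k : ℝ) - m)) / (12 * k) with hGdef
  set E : ℂ := Complex.exp (2 * π * Complex.I / k) with hEdef
  have hprim : IsPrimitiveRoot E k := Complex.isPrimitiveRoot_exp k (by omega)
  set H : ℕ → ℂ := fun j => ∑ m ∈ Finset.range k, (G m : ℂ) * (E ^ j) ^ m with hHdef
  -- symmetry of G
  have hGsymm : ∀ m, 1 ≤ m → m ≤ k - 1 → G (k - m) = G m := by
    intro m h1 h2
    simp only [hGdef]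
    have hcast : ((k - m : ℕ) : ℝ) = (k : ℝ) - m := by
      push_cast [Nat.cast_sub (by omega : m ≤ k)]; ring
    rw [hcast]
    ring_nf
  -- Step A : the per-frequency identity
  have stepA : ∀ j ∈ Finset.Icc 1 (k - 1),
      ((2 - 2 * Real.cos (2 * π * j / k) : ℝ) : ℂ) * H j = 1 := by
    intro j hj
    rw [Finset.mem_Icc] at hj
    obtain ⟨ζ, hζdef⟩ : ∃ z : ℂ, z = E ^ j := ⟨_, rfl⟩
    have hζk : ζ ^ k = 1 := by
      rw [hζdef, ← pow_mul, mul_comm, pow_mul, hprim.pow_eq_one, one_pow]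
    have hζ1 : ζ ≠ 1 := by
      intro hc
      rw [hζdef] at hc
      have h1 : k ∣ j := (hprim.pow_eq_one_iff_dvd j).mp hc
      have h2 := Nat.le_of_dvd (by omega) h1
      omega
    have hζ0 : ζ ≠ 0 := by
      rw [hζdef, hEdef]
      exact pow_ne_zero _ (Complex.exp_ne_zero _)
    have h1ζ : (1 : ℂ) - ζ ≠ 0 := sub_ne_zero.mpr (Ne.symm hζ1)
    -- the cosine in terms of ζ
    have hζexp : ζ = Complex.exp (((2 * π * j / k : ℝ) : ℂ) * Complex.I) := by
      rw [hζdef, hEdef, ← Complex.exp_nat_mul]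
      congr 1
      push_cast
      ring
    have hre : ζ.re = Real.cos (2 * π * j / k) := by
      rw [hζexp]; exact Complex.exp_ofReal_mul_I_re _
    have hinv : ζ⁻¹ = (starRingEnd ℂ) ζ := by
      apply Complex.inv_eq_conj
      rw [hζexp]
      exact Complex.norm_exp_ofReal_mul_I _
    have hcos : ((2 - 2 * Real.cos (2 * π * j / k) : ℝ) : ℂ) = 2 - ζ - ζ⁻¹ := by
      rw [hinv, ← hre]
      have hconj := Complex.add_conj ζ
      push_cast at hconj ⊢
      linear_combination hconj
    rw [hcos]
    -- geometric sums
    have hg : ∑ m ∈ Finset.range k, ζ ^ m = 0 := by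
      rw [geom_sum_eq hζ1, hζk]
      simp
    have e1 : (1 - ζ) * ∑ m ∈ Finset.range k, (m : ℂ) * ζ ^ m = -(k : ℂ) := by
      rw [csum1, hg, hζk]; ring
    have e2 : (1 - ζ) * ∑ m ∈ Finset.range k, (m : ℂ) ^ 2 * ζ ^ m
        = 2 * (∑ m ∈ Finset.range k, (m : ℂ) * ζ ^ m) + 1 - ((k : ℂ) - 1) ^ 2 := by
      rw [csum2, hg, hζk]; ring
    -- expand H j
    have hH : H j = (((k : ℂ) ^ 2 - 1) * (∑ m ∈ Finset.range k, ζ ^ m)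
        - 6 * k * (∑ m ∈ Finset.range k, (m : ℂ) * ζ ^ m)
        + 6 * ∑ m ∈ Finset.range k, (m : ℂ) ^ 2 * ζ ^ m) / (12 * k) := by
      simp only [hHdef, ← hζdef, hGdef]
      calc ∑ m ∈ Finset.range k, ((((k : ℝ) ^ 2 - 1 - 6 * m * ((k : ℝ) - m)) / (12 * k) : ℝ) : ℂ)
            * ζ ^ m
          = ∑ m ∈ Finset.range k, ((((k : ℂ) ^ 2 - 1) * ζ ^ m
              - 6 * (k : ℂ) * ((m : ℂ) * ζ ^ m) + 6 * ((m : ℂ) ^ 2 * ζ ^ m)) / (12 * k)) := by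
            apply Finset.sum_congr rfl
            intro m _
            push_cast
            field_simp
            ring
        _ = (∑ m ∈ Finset.range k, (((k : ℂ) ^ 2 - 1) * ζ ^ m
              - 6 * (k : ℂ) * ((m : ℂ) * ζ ^ m) + 6 * ((m : ℂ) ^ 2 * ζ ^ m))) / (12 * k) := by
            rw [Finset.sum_div]
        _ = (((k : ℂ) ^ 2 - 1) * (∑ m ∈ Finset.range k, ζ ^ m)
              - 6 * k * (∑ m ∈ Finset.range k, (m : ℂ) * ζ ^ m)
              + 6 * ∑ m ∈ Finset.range k, (m : ℂ) ^ 2 * ζ ^ m) / (12 * k) := by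
            rw [Finset.sum_add_distrib, Finset.sum_sub_distrib, ← Finset.mul_sum,
              ← Finset.mul_sum, ← Finset.mul_sum]
    rw [hH, hg]
    field_simp [hζ0]
    linear_combination ((-12 : ℂ) + 6 * (k : ℂ) * (1 - ζ)) * e1 + (-6 * (1 - ζ)) * e2
  -- positivity of 2 - 2 cos
  have hpos : ∀ j ∈ Finset.Icc 1 (k - 1), (0 : ℝ) < 2 - 2 * Real.cos (2 * π * j / k) := by
    intro j hj
    rw [Finset.mem_Icc] at hj
    have hπ := Real.pi_pos
    have hjpos : (0 : ℝ) < j := by exact_mod_cast (by omega : 0 < j)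
    have hkpos : (0 : ℝ) < k := by exact_mod_cast (by omega : 0 < k)
    have hjk : (j : ℝ) < k := by exact_mod_cast (by omega : j < k)
    have h0 : 0 < 2 * π * j / k := by positivity
    have h2 : 2 * π * j / k < 2 * π := by
      rw [div_lt_iff₀ hkpos]
      nlinarith
    have hne : Real.cos (2 * π * j / k) ≠ 1 := by
      intro hc
      have h3 : 2 * π * (j : ℝ) / k = 0 :=
        (Real.cos_eq_one_iff_of_lt_of_lt (by linarith) h2).mp hc
      linarith
    have hle := Real.cos_le_one (2 * π * j / k)
    rcases lt_of_le_of_ne hle hne with h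
    linarith
  -- H j is the real number 1/(2-2cos)
  have hHreal : ∀ j ∈ Finset.Icc 1 (k - 1),
      H j = (((1 : ℝ) / (2 - 2 * Real.cos (2 * π * j / k)) : ℝ) : ℂ) := by
    intro j hj
    have h1 := stepA j hj
    have h2 := hpos j hj
    have h3 : ((2 - 2 * Real.cos (2 * π * j / k) : ℝ) : ℂ) ≠ 0 := by
      exact_mod_cast ne_of_gt h2
    rw [Complex.ofReal_div, Complex.ofReal_one]
    rw [eq_div_iff h3]
    linear_combination h1
  -- Step B : H 0 = 0
  have hGsum : ∑ m ∈ Finset.range k, G m = 0 := by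
    simp only [hGdef]
    rw [← Finset.sum_div]
    have h1 : ∑ m ∈ Finset.range k, ((k : ℝ) ^ 2 - 1 - 6 * m * ((k : ℝ) - m))
        = (Finset.range k).card * ((k : ℝ) ^ 2 - 1)
          - 6 * (k : ℝ) * (∑ m ∈ Finset.range k, (m : ℝ))
          + 6 * ∑ m ∈ Finset.range k, (m : ℝ) ^ 2 := by
      rw [Finset.sum_congr rfl (fun m _ => by ring :
        ∀ m ∈ Finset.range k, (k : ℝ) ^ 2 - 1 - 6 * m * ((k : ℝ) - m)
          = ((k : ℝ) ^ 2 - 1) - 6 * (k : ℝ) * (m : ℝ) + 6 * (m : ℝ) ^ 2)]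
      rw [Finset.sum_add_distrib, Finset.sum_sub_distrib, Finset.sum_const,
        ← Finset.mul_sum, ← Finset.mul_sum, nsmul_eq_mul]
    rw [h1, psum1, psum2, Finset.card_range]
    field_simp
    ring
  have hH0 : H 0 = 0 := by
    simp only [hHdef, pow_zero, one_pow, mul_one]
    rw [← Complex.ofReal_sum, hGsum, Complex.ofReal_zero]
  -- Step C : Parseval
  have stepC : ∑ j ∈ Finset.range k, H j ^ 2
      = (k : ℂ) * ∑ m ∈ Finset.range k, ((G m : ℝ) : ℂ) ^ 2 := by
    have expand : ∀ j, H j ^ 2 = ∑ m ∈ Finset.range k, ∑ n ∈ Finset.range k,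
        ((G m : ℝ) : ℂ) * ((G n : ℝ) : ℂ) * (E ^ (m + n)) ^ j := by
      intro j
      rw [sq]
      simp only [hHdef]
      rw [Finset.sum_mul_sum]
      apply Finset.sum_congr rfl; intro m _
      apply Finset.sum_congr rfl; intro n _
      have h : (E ^ (m + n)) ^ j = (E ^ j) ^ m * (E ^ j) ^ n := by
        rw [← pow_mul, ← pow_mul, ← pow_mul, ← pow_add]
        congr 1
        ring
      rw [h]
      ring
    calc ∑ j ∈ Finset.range k, H j ^ 2
        = ∑ j ∈ Finset.range k, ∑ m ∈ Finset.range k, ∑ n ∈ Finset.range k,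
            ((G m : ℝ) : ℂ) * ((G n : ℝ) : ℂ) * (E ^ (m + n)) ^ j :=
          Finset.sum_congr rfl (fun j _ => expand j)
      _ = ∑ m ∈ Finset.range k, ∑ n ∈ Finset.range k, ∑ j ∈ Finset.range k,
            ((G m : ℝ) : ℂ) * ((G n : ℝ) : ℂ) * (E ^ (m + n)) ^ j := by
          rw [Finset.sum_comm]
          exact Finset.sum_congr rfl (fun m _ => Finset.sum_comm)
      _ = ∑ m ∈ Finset.range k, ∑ n ∈ Finset.range k,
            ((G m : ℝ) : ℂ) * ((G n : ℝ) : ℂ) * (if k ∣ m + n then (k : ℂ) else 0) := by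
          apply Finset.sum_congr rfl; intro m _
          apply Finset.sum_congr rfl; intro n _
          rw [← Finset.mul_sum, orth hprim (m + n)]
      _ = ∑ m ∈ Finset.range k, ((G m : ℝ) : ℂ) * ((G m : ℝ) : ℂ) * (k : ℂ) := by
          apply Finset.sum_congr rfl; intro m hm
          rw [Finset.mem_range] at hm
          rcases Nat.eq_zero_or_pos m with hm0 | hm1
          · subst hm0
            rw [Finset.sum_eq_single 0]
            · simp
            · intro n hn hne
              rw [Finset.mem_range] at hn
              have h' : ¬ k ∣ 0 + n := by
                intro hdvd
                have := Nat.le_of_dvd (by omega) hdvd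
                omega
              rw [if_neg h', mul_zero]
            · intro h; exact absurd (Finset.mem_range.mpr (by omega)) h
          · rw [Finset.sum_eq_single (k - m)]
            · have hmm : m + (k - m) = k := by omega
              rw [hmm, if_pos dvd_rfl]
              have hsym : ((G (k - m) : ℝ) : ℂ) = ((G m : ℝ) : ℂ) := by
                rw [hGsymm m (by omega) (by omega)]
              rw [hsym]
            · intro n hn hne
              rw [Finset.mem_range] at hn
              have h' : ¬ k ∣ m + n := by
                intro hdvd
                obtain ⟨c, hc⟩ := hdvd
                rcases c with _ | _ | c
                · omega
                · omega
                · have hle : k * 2 ≤ k * (c + 1 + 1) := Nat.mul_le_mul_left k (by omega)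
                  omega
              rw [if_neg h', mul_zero]
            · intro h; exact absurd (Finset.mem_range.mpr (by omega)) h
      _ = (k : ℂ) * ∑ m ∈ Finset.range k, ((G m : ℝ) : ℂ) ^ 2 := by
          rw [Finset.mul_sum]
          exact Finset.sum_congr rfl (fun m _ => by ring)
  -- Step D : the sum of squares of G
  have stepD : ∑ m ∈ Finset.range k, (G m) ^ 2
      = ((k : ℝ) ^ 4 + 10 * (k : ℝ) ^ 2 - 11) / (720 * k) := by
    simp only [hGdef]
    have h1 : ∀ m ∈ Finset.range k,
        (((k : ℝ) ^ 2 - 1 - 6 * m * ((k : ℝ) - m)) / (12 * k)) ^ 2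
          = ((((k : ℝ) ^ 2 - 1) ^ 2 - (12 * (k : ℝ) ^ 3 - 12 * (k : ℝ)) * (m : ℝ)
              + (48 * (k : ℝ) ^ 2 - 12) * (m : ℝ) ^ 2
              - 72 * (k : ℝ) * (m : ℝ) ^ 3 + 36 * (m : ℝ) ^ 4) / (144 * (k : ℝ) ^ 2)) := by
      intro m _
      rw [div_pow]
      congr 1
      · ring
      · ring
    rw [Finset.sum_congr rfl h1, ← Finset.sum_div]
    have h2 : ∑ m ∈ Finset.range k, (((k : ℝ) ^ 2 - 1) ^ 2
          - (12 * (k : ℝ) ^ 3 - 12 * (k : ℝ)) * (m : ℝ)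
          + (48 * (k : ℝ) ^ 2 - 12) * (m : ℝ) ^ 2
          - 72 * (k : ℝ) * (m : ℝ) ^ 3 + 36 * (m : ℝ) ^ 4)
        = (Finset.range k).card * ((k : ℝ) ^ 2 - 1) ^ 2
          - (12 * (k : ℝ) ^ 3 - 12 * (k : ℝ)) * (∑ m ∈ Finset.range k, (m : ℝ))
          + (48 * (k : ℝ) ^ 2 - 12) * (∑ m ∈ Finset.range k, (m : ℝ) ^ 2)
          - 72 * (k : ℝ) * (∑ m ∈ Finset.range k, (m : ℝ) ^ 3)
          + 36 * (∑ m ∈ Finset.range k, (m : ℝ) ^ 4) := by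
      rw [Finset.sum_add_distrib, Finset.sum_sub_distrib, Finset.sum_add_distrib,
        Finset.sum_sub_distrib, Finset.sum_const, ← Finset.mul_sum, ← Finset.mul_sum,
        ← Finset.mul_sum, ← Finset.mul_sum, nsmul_eq_mul]
    rw [h2, psum1, psum2, psum3, psum4, Finset.card_range]
    field_simp
    ring
  -- assemble
  have hsplit : Finset.range k = insert 0 (Finset.Icc 1 (k - 1)) := by
    ext x
    simp only [Finset.mem_range, Finset.mem_insert, Finset.mem_Icc]
    omega
  have h0notin : (0 : ℕ) ∉ Finset.Icc 1 (k - 1) := by simp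
  have keyC : ((∑ j ∈ Finset.Icc 1 (k - 1),
        ((1 : ℝ) / (2 - 2 * Real.cos (2 * π * j / k))) ^ 2 : ℝ) : ℂ)
      = (((k : ℝ) * ∑ m ∈ Finset.range k, (G m) ^ 2 : ℝ) : ℂ) := by
    calc ((∑ j ∈ Finset.Icc 1 (k - 1),
          ((1 : ℝ) / (2 - 2 * Real.cos (2 * π * j / k))) ^ 2 : ℝ) : ℂ)
        = ∑ j ∈ Finset.Icc 1 (k - 1),
            (((1 : ℝ) / (2 - 2 * Real.cos (2 * π * j / k)) : ℝ) : ℂ) ^ 2 := by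
          rw [Complex.ofReal_sum]
          exact Finset.sum_congr rfl (fun j _ => Complex.ofReal_pow _ _)
      _ = ∑ j ∈ Finset.Icc 1 (k - 1), H j ^ 2 :=
          Finset.sum_congr rfl (fun j hj => by rw [hHreal j hj])
      _ = ∑ j ∈ Finset.range k, H j ^ 2 := by
          rw [hsplit, Finset.sum_insert h0notin, hH0]
          ring
      _ = (k : ℂ) * ∑ m ∈ Finset.range k, ((G m : ℝ) : ℂ) ^ 2 := stepC
      _ = (((k : ℝ) * ∑ m ∈ Finset.range k, (G m) ^ 2 : ℝ) : ℂ) := by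
          push_cast
          ring
  have keyR : ∑ j ∈ Finset.Icc 1 (k - 1),
      ((1 : ℝ) / (2 - 2 * Real.cos (2 * π * j / k))) ^ 2
      = (k : ℝ) * ∑ m ∈ Finset.range k, (G m) ^ 2 :=
    Complex.ofReal_injective keyC
  have hfinal : ∑ j ∈ Finset.Icc 1 (k - 1),
      (2 / (2 - 2 * Real.cos (2 * π * j / k)) ^ 2)
      = 2 * ((k : ℝ) * ∑ m ∈ Finset.range k, (G m) ^ 2) := by
    rw [← keyR, Finset.mul_sum]
    apply Finset.sum_congr rfl
    intro j hj
    rw [div_pow, one_pow]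
    ring
  rw [hfinal, stepD]
  field_simp
  ring
end
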